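/- arXiv:1408.0994 — 14 statements merged into one kernel-verified Lean document; each statement's English description precedes it below -/
import Mathlib

section
/- Suppose the invertible blocked matrix P admits a decomposition (3) with factors L, C₄, C₃, C₁, R. Then: (i) rank C₃ = r₃; (ii) rank L + r₁ ≥ n; (iii) rank R + r₄ ≥ m; (iv) rank R + rank L ≥ r₂. In particular, rank R + rank L ≥ max(r₂, n + m − r₁ − r₄). -/
open Matrix

lemma myrank_add_le {K : Type*} [Field K] {m n : ℕ}
    (A B : Matrix (Fin m) (Fin n) K) : (A + B).rank ≤ A.rank + B.rank := by
  simp only [Matrix.rank]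
  have h : LinearMap.range (A + B).mulVecLin ≤
      LinearMap.range A.mulVecLin ⊔ LinearMap.range B.mulVecLin := by
    rintro x ⟨v, rfl⟩
    simp only [Matrix.mulVecLin_add, LinearMap.add_apply]
    exact Submodule.add_mem_sup ⟨v, rfl⟩ ⟨v, rfl⟩
  exact (Submodule.finrank_mono h).trans
    (Submodule.finrank_add_le_finrank_add_finrank _ _)

/-- Theorem 1 (lower bounds): if the invertible blocked matrix `P` admits a
decomposition (3) with factors `L, C₄, C₃, C₁, R`, then
(i) `rank C₃ = r₃`, (ii) `rank L + r₁ ≥ n`, (iii) `rank R + r₄ ≥ m`,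
(iv) `rank R + rank L ≥ r₂`, and in particular
`rank R + rank L ≥ max (r₂, n + m - r₁ - r₄)`. -/
theorem stmt_0 {K : Type*} [Field K] {m n : ℕ}
    (P₄ : Matrix (Fin m) (Fin m) K) (P₃ : Matrix (Fin m) (Fin n) K)
    (P₂ : Matrix (Fin n) (Fin m) K) (P₁ : Matrix (Fin n) (Fin n) K)
    (hP : IsUnit (Matrix.fromBlocks P₄ P₃ P₂ P₁))
    (L R : Matrix (Fin n) (Fin m) K)
    (C₄ : Matrix (Fin m) (Fin m) K) (C₃ : Matrix (Fin m) (Fin n) K)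
    (C₁ : Matrix (Fin n) (Fin n) K)
    (hdec : Matrix.fromBlocks P₄ P₃ P₂ P₁ =
      Matrix.fromBlocks 1 0 L 1 * Matrix.fromBlocks C₄ C₃ 0 C₁ *
        Matrix.fromBlocks 1 0 R 1) :
    C₃.rank = P₃.rank ∧
    L.rank + P₁.rank ≥ n ∧
    R.rank + P₄.rank ≥ m ∧
    R.rank + L.rank ≥ P₂.rank ∧
    R.rank + L.rank ≥ max P₂.rank (n + m - P₁.rank - P₄.rank) := by
  -- expand the product
  have hdec0 := hdec
  rw [Matrix.fromBlocks_multiply, Matrix.fromBlocks_multiply] at hdec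
  simp only [Matrix.mul_one, Matrix.one_mul, Matrix.mul_zero, Matrix.zero_mul,
    add_zero, zero_add, Matrix.zero_mul] at hdec
  have h₄ : P₄ = C₄ + C₃ * R := by
    have := congrArg Matrix.toBlocks₁₁ hdec; simpa [Matrix.toBlocks_fromBlocks₁₁] using this
  have h₃ : P₃ = C₃ := by
    have := congrArg Matrix.toBlocks₁₂ hdec; simpa [Matrix.toBlocks_fromBlocks₁₂] using this
  have h₂ : P₂ = L * C₄ + (L * C₃ + C₁) * R := by
    have := congrArg Matrix.toBlocks₂₁ hdec; simpa [Matrix.toBlocks_fromBlocks₂₁] using this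
  have h₁ : P₁ = L * C₃ + C₁ := by
    have := congrArg Matrix.toBlocks₂₂ hdec; simpa [Matrix.toBlocks_fromBlocks₂₂] using this
  -- invertibility of the middle factor
  have hUmid : IsUnit (Matrix.fromBlocks C₄ C₃ 0 C₁) := by
    have hU1 : IsUnit (Matrix.fromBlocks (1 : Matrix (Fin m) (Fin m) K) 0 L (1 : Matrix (Fin n) (Fin n) K)) := by
      rw [Matrix.isUnit_iff_isUnit_det, Matrix.det_fromBlocks_zero₁₂]
      simp
    have hU2 : IsUnit (Matrix.fromBlocks (1 : Matrix (Fin m) (Fin m) K) 0 R (1 : Matrix (Fin n) (Fin n) K)) := by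
      rw [Matrix.isUnit_iff_isUnit_det, Matrix.det_fromBlocks_zero₁₂]
      simp
    rw [Matrix.isUnit_iff_isUnit_det] at hU1 hU2 hP ⊢
    rw [hdec0, Matrix.det_mul, Matrix.det_mul] at hP
    exact (IsUnit.mul_iff.1 ((IsUnit.mul_iff.1 hP).1)).2
  have hdet : IsUnit (C₄.det * C₁.det) := by
    rw [Matrix.isUnit_iff_isUnit_det, Matrix.det_fromBlocks_zero₂₁] at hUmid
    exact hUmid
  have hC₄ : IsUnit C₄ := by
    rw [Matrix.isUnit_iff_isUnit_det]; exact (IsUnit.mul_iff.1 hdet).1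
  have hC₁ : IsUnit C₁ := by
    rw [Matrix.isUnit_iff_isUnit_det]; exact (IsUnit.mul_iff.1 hdet).2
  have rC₄ : C₄.rank = m := by simpa using Matrix.rank_of_isUnit C₄ hC₄
  have rC₁ : C₁.rank = n := by simpa using Matrix.rank_of_isUnit C₁ hC₁
  -- (ii)
  have hii : L.rank + P₁.rank ≥ n := by
    have hC₁eq : C₁ = P₁ + L * (-C₃) := by rw [h₁, Matrix.mul_neg]; abel
    calc n = C₁.rank := rC₁.symm
    _ ≤ P₁.rank + (L * (-C₃)).rank := by rw [hC₁eq]; exact myrank_add_le _ _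
    _ ≤ P₁.rank + L.rank := Nat.add_le_add_left (Matrix.rank_mul_le_left _ _) _
    _ = L.rank + P₁.rank := by ring
  -- (iii)
  have hiii : R.rank + P₄.rank ≥ m := by
    have hC₄eq : C₄ = P₄ + (-C₃) * R := by rw [h₄, Matrix.neg_mul]; abel
    calc m = C₄.rank := rC₄.symm
    _ ≤ P₄.rank + ((-C₃) * R).rank := by rw [hC₄eq]; exact myrank_add_le _ _
    _ ≤ P₄.rank + R.rank := Nat.add_le_add_left (Matrix.rank_mul_le_right _ _) _
    _ = R.rank + P₄.rank := by ring
  -- (iv)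
  have hiv : R.rank + L.rank ≥ P₂.rank := by
    have hP₂eq : P₂ = L * C₄ + P₁ * R := by rw [h₂, h₁]
    calc P₂.rank ≤ (L * C₄).rank + (P₁ * R).rank := by
          rw [hP₂eq]; exact myrank_add_le _ _
    _ ≤ L.rank + R.rank := by
        exact add_le_add (Matrix.rank_mul_le_left _ _) (Matrix.rank_mul_le_right _ _)
    _ = R.rank + L.rank := by ring
  refine ⟨by rw [h₃], hii, hiii, hiv, max_le hiv (by omega)⟩
end

section
/- Suppose P = A · B, where A and B are (m+n)×(m+n) matrices over K blocked in the same way as P (with blocks A₄, A₃, A₂, A₁ and B₄, B₃, B₂, B₁, where A₄ and B₄ are m×m), and suppose the leading principal block A₄ and the trailing principal block B₁ are invertible. Then rank A₃ + rank B₃ ≥ r₃ and rank A₂ + rank B₂ ≥ max(r₂, n + m − r₁ − r₄). -/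
open Matrix

/-- Rank is subadditive. -/
lemma rank_add_le' {K : Type*} [Field K] {p q : Type*} [Fintype p] [Fintype q]
    (A B : Matrix p q K) : (A + B).rank ≤ A.rank + B.rank := by
  rw [Matrix.rank, Matrix.rank, Matrix.rank, mulVecLin_add]
  refine le_trans (Submodule.finrank_mono ?_) (Submodule.finrank_add_le_finrank_add_finrank _ _)
  rintro x ⟨v, rfl⟩
  exact Submodule.add_mem_sup ⟨v, rfl⟩ ⟨v, rfl⟩

/-- Decomposition (5): if `P = A · B` where the leading principal block `A₄` of `A`
and the trailing principal block `B₁` of `B` are invertible, then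
`rank A₃ + rank B₃ ≥ r₃` and `rank A₂ + rank B₂ ≥ max (r₂, n + m - r₁ - r₄)`. -/
theorem stmt_3 {K : Type*} [Field K] {m n : ℕ}
    (P₄ : Matrix (Fin m) (Fin m) K) (P₃ : Matrix (Fin m) (Fin n) K)
    (P₂ : Matrix (Fin n) (Fin m) K) (P₁ : Matrix (Fin n) (Fin n) K)
    (hP : IsUnit (Matrix.fromBlocks P₄ P₃ P₂ P₁))
    (A₄ : Matrix (Fin m) (Fin m) K) (A₃ : Matrix (Fin m) (Fin n) K)
    (A₂ : Matrix (Fin n) (Fin m) K) (A₁ : Matrix (Fin n) (Fin n) K)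
    (B₄ : Matrix (Fin m) (Fin m) K) (B₃ : Matrix (Fin m) (Fin n) K)
    (B₂ : Matrix (Fin n) (Fin m) K) (B₁ : Matrix (Fin n) (Fin n) K)
    (hAB : Matrix.fromBlocks P₄ P₃ P₂ P₁ =
      Matrix.fromBlocks A₄ A₃ A₂ A₁ * Matrix.fromBlocks B₄ B₃ B₂ B₁)
    (hA₄ : IsUnit A₄) (hB₁ : IsUnit B₁) :
    A₃.rank + B₃.rank ≥ P₃.rank ∧
    A₂.rank + B₂.rank ≥ max P₂.rank (n + m - P₁.rank - P₄.rank) := by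
  set A : Matrix (Fin m ⊕ Fin n) (Fin m ⊕ Fin n) K := Matrix.fromBlocks A₄ A₃ A₂ A₁ with hA
  set B : Matrix (Fin m ⊕ Fin n) (Fin m ⊕ Fin n) K := Matrix.fromBlocks B₄ B₃ B₂ B₁ with hB
  have hABfull : Matrix.fromBlocks P₄ P₃ P₂ P₁ = A * B := hAB
  -- block equations
  rw [Matrix.fromBlocks_multiply] at hAB
  rw [Matrix.fromBlocks_inj] at hAB
  obtain ⟨hP₄, hP₃, hP₂, hP₁⟩ := hAB
  -- A and B are invertible
  have hdetP : IsUnit (A * B).det := by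
    rw [← hABfull]
    exact (Matrix.isUnit_iff_isUnit_det _).mp hP
  rw [Matrix.det_mul] at hdetP
  have hdetA : IsUnit A.det := isUnit_of_mul_isUnit_left hdetP
  have hdetB : IsUnit B.det := isUnit_of_mul_isUnit_right hdetP
  have hdetA₄ : IsUnit A₄.det := (Matrix.isUnit_iff_isUnit_det _).mp hA₄
  have hdetB₁ : IsUnit B₁.det := (Matrix.isUnit_iff_isUnit_det _).mp hB₁
  -- Part 1 : rank P₃ ≤ rank A₃ + rank B₃
  have h3 : P₃.rank ≤ A₃.rank + B₃.rank := by
    calc P₃.rank = (A₄ * B₃ + A₃ * B₁).rank := by rw [hP₃]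
      _ ≤ (A₄ * B₃).rank + (A₃ * B₁).rank := rank_add_le' _ _
      _ ≤ A₃.rank + B₃.rank := by
          have h1 := Matrix.rank_mul_eq_right_of_isUnit_det A₄ B₃ hdetA₄
          have h2 := Matrix.rank_mul_eq_left_of_isUnit_det B₁ A₃ hdetB₁
          rw [h1, h2]; omega
  -- Part 2a : rank P₂ ≤ rank A₂ + rank B₂
  have h2a : P₂.rank ≤ A₂.rank + B₂.rank := by
    calc P₂.rank = (A₂ * B₄ + A₁ * B₂).rank := by rw [hP₂]
      _ ≤ (A₂ * B₄).rank + (A₁ * B₂).rank := rank_add_le' _ _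
      _ ≤ A₂.rank + B₂.rank :=
          add_le_add (Matrix.rank_mul_le_left _ _) (Matrix.rank_mul_le_right _ _)
  -- express A₁ and B₄
  have hA₁eq : A₁ = (P₁ - A₂ * B₃) * B₁⁻¹ := by
    have : A₁ * B₁ = P₁ - A₂ * B₃ := by rw [hP₁]; abel
    rw [← this, Matrix.mul_assoc, Matrix.mul_nonsing_inv _ hdetB₁, Matrix.mul_one]
  have hB₄eq : B₄ = A₄⁻¹ * (P₄ - A₃ * B₂) := by
    have : A₄ * B₄ = P₄ - A₃ * B₂ := by rw [hP₄]; abel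
    rw [← this, ← Matrix.mul_assoc, Matrix.nonsing_inv_mul _ hdetA₄, Matrix.one_mul]
  -- inverse block identities
  set C : Matrix (Fin m ⊕ Fin n) (Fin m ⊕ Fin n) K := A⁻¹ with hC
  set D : Matrix (Fin m ⊕ Fin n) (Fin m ⊕ Fin n) K := B⁻¹ with hD
  have hAC : A * C = 1 := Matrix.mul_nonsing_inv _ hdetA
  have hDB : D * B = 1 := Matrix.nonsing_inv_mul _ hdetB
  -- bottom-right block of A * C = 1 : A₂ * C₁₂ + A₁ * C₂₂ = 1
  have hACb : A₂ * C.toBlocks₁₂ + A₁ * C.toBlocks₂₂ = 1 := by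
    have := congrArg Matrix.toBlocks₂₂ hAC
    rw [hA, ← Matrix.fromBlocks_toBlocks C, Matrix.fromBlocks_multiply,
      ← Matrix.fromBlocks_one, Matrix.toBlocks_fromBlocks₂₂, Matrix.toBlocks_fromBlocks₂₂]
        at this
    simpa using this
  -- top-left block of D * B = 1 : D₁₁ * B₄ + D₁₂ * B₂ = 1
  have hDBt : D.toBlocks₁₁ * B₄ + D.toBlocks₁₂ * B₂ = 1 := by
    have := congrArg Matrix.toBlocks₁₁ hDB
    rw [hB, ← Matrix.fromBlocks_toBlocks D, Matrix.fromBlocks_multiply,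
      ← Matrix.fromBlocks_one, Matrix.toBlocks_fromBlocks₁₁, Matrix.toBlocks_fromBlocks₁₁]
        at this
    simpa using this
  -- n ≤ rank A₂ + rank P₁
  have hn : n ≤ A₂.rank + P₁.rank := by
    have key : A₂ * (C.toBlocks₁₂ - B₃ * B₁⁻¹ * C.toBlocks₂₂)
        + P₁ * (B₁⁻¹ * C.toBlocks₂₂) = 1 := by
      rw [← hACb, hA₁eq]
      simp only [Matrix.mul_sub, Matrix.sub_mul, Matrix.mul_assoc]
      abel
    have h1 : (1 : Matrix (Fin n) (Fin n) K).rank = n := by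
      rw [Matrix.rank_one]; simp
    calc n = (1 : Matrix (Fin n) (Fin n) K).rank := h1.symm
      _ = (A₂ * (C.toBlocks₁₂ - B₃ * B₁⁻¹ * C.toBlocks₂₂)
            + P₁ * (B₁⁻¹ * C.toBlocks₂₂)).rank := by rw [key]
      _ ≤ (A₂ * (C.toBlocks₁₂ - B₃ * B₁⁻¹ * C.toBlocks₂₂)).rank
            + (P₁ * (B₁⁻¹ * C.toBlocks₂₂)).rank := rank_add_le' _ _
      _ ≤ A₂.rank + P₁.rank :=
          add_le_add (Matrix.rank_mul_le_left _ _) (Matrix.rank_mul_le_left _ _)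
  -- m ≤ rank B₂ + rank P₄
  have hm : m ≤ P₄.rank + B₂.rank := by
    have key : (D.toBlocks₁₁ * A₄⁻¹) * P₄
        + (D.toBlocks₁₂ - D.toBlocks₁₁ * A₄⁻¹ * A₃) * B₂ = 1 := by
      rw [← hDBt, hB₄eq]
      simp only [Matrix.mul_sub, Matrix.sub_mul, Matrix.mul_assoc]
      abel
    have h1 : (1 : Matrix (Fin m) (Fin m) K).rank = m := by
      rw [Matrix.rank_one]; simp
    calc m = (1 : Matrix (Fin m) (Fin m) K).rank := h1.symm
      _ = ((D.toBlocks₁₁ * A₄⁻¹) * P₄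
            + (D.toBlocks₁₂ - D.toBlocks₁₁ * A₄⁻¹ * A₃) * B₂).rank := by rw [key]
      _ ≤ ((D.toBlocks₁₁ * A₄⁻¹) * P₄).rank
            + ((D.toBlocks₁₂ - D.toBlocks₁₁ * A₄⁻¹ * A₃) * B₂).rank := rank_add_le' _ _
      _ ≤ P₄.rank + B₂.rank :=
          add_le_add (Matrix.rank_mul_le_right _ _) (Matrix.rank_mul_le_right _ _)
  refine ⟨h3, ?_⟩
  rw [ge_iff_le, max_le_iff]
  exact ⟨h2a, by omega⟩
end

section
/- For the blocks of the invertible matrix P one has P₂(ker P₄) ∩ P₁(ker P₃) = {0} (as subspaces of Kⁿ) and P₄(ker P₂) ∩ P₃(ker P₁) = {0} (as subspaces of Kᵐ). -/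
theorem aux_stmt_6 {K : Type*} [Field K] {m n : Type*} [Fintype m] [Fintype n]
    [DecidableEq m] [DecidableEq n]
    (P₄ : Matrix m m K) (P₃ : Matrix m n K)
    (P₂ : Matrix n m K) (P₁ : Matrix n n K)
    (hP : IsUnit (Matrix.fromBlocks P₄ P₃ P₂ P₁)) :
    (LinearMap.ker P₄.mulVecLin).map P₂.mulVecLin ⊓
      (LinearMap.ker P₃.mulVecLin).map P₁.mulVecLin = ⊥ := by
  have hinj : Function.Injective (Matrix.fromBlocks P₄ P₃ P₂ P₁).mulVec :=
    Matrix.mulVec_injective_iff_isUnit.2 hP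
  rw [eq_bot_iff]
  rintro x ⟨⟨u, hu, hux⟩, ⟨v, hv, hvx⟩⟩
  simp only [SetLike.mem_coe, LinearMap.mem_ker, Matrix.mulVecLin_apply] at hu hv
  simp only [Matrix.mulVecLin_apply] at hux hvx
  have h0 : (Matrix.fromBlocks P₄ P₃ P₂ P₁).mulVec (Sum.elim u (-v)) =
      (Matrix.fromBlocks P₄ P₃ P₂ P₁).mulVec 0 := by
    rw [Matrix.mulVec_zero, Matrix.fromBlocks_mulVec]
    simp [hu, hv, hux, hvx, Matrix.mulVec_neg]
  have := hinj h0
  have hu0 : u = 0 := by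
    funext i; exact congrFun this (Sum.inl i)
  simp only [Submodule.mem_bot]
  rw [← hux, hu0, Matrix.mulVec_zero]


/-- For the blocks of an invertible matrix `P`,
`P₂(ker P₄) ∩ P₁(ker P₃) = {0}` (in `Kⁿ`) and
`P₄(ker P₂) ∩ P₃(ker P₁) = {0}` (in `Kᵐ`). -/
theorem stmt_6 {K : Type*} [Field K] {m n : ℕ}
    (P₄ : Matrix (Fin m) (Fin m) K) (P₃ : Matrix (Fin m) (Fin n) K)
    (P₂ : Matrix (Fin n) (Fin m) K) (P₁ : Matrix (Fin n) (Fin n) K)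
    (hP : IsUnit (Matrix.fromBlocks P₄ P₃ P₂ P₁)) :
    (LinearMap.ker P₄.mulVecLin).map P₂.mulVecLin ⊓
      (LinearMap.ker P₃.mulVecLin).map P₁.mulVecLin = ⊥ ∧
    (LinearMap.ker P₂.mulVecLin).map P₄.mulVecLin ⊓
      (LinearMap.ker P₁.mulVecLin).map P₃.mulVecLin = ⊥ := by
  refine ⟨aux_stmt_6 _ _ _ _ hP, ?_⟩
  have hP' : IsUnit (Matrix.fromBlocks P₁ P₂ P₃ P₄) := by
    rw [← Matrix.fromBlocks_submatrix_sum_swap_sum_swap]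
    exact (Matrix.isUnit_submatrix_equiv (Equiv.sumComm _ _) (Equiv.sumComm _ _)).2 hP
  rw [inf_comm]
  exact aux_stmt_6 _ _ _ _ hP'
end

section
/- For the blocks of the invertible matrix P: dim P₃(ker P₁) = dim ker P₁, and dim P₃(ker P₁) + r₁ = n; dim P₄(ker P₂) = dim ker P₂, and dim P₄(ker P₂) + r₂ = m; dim P₁(ker P₃) = dim ker P₃, and dim P₁(ker P₃) + r₃ = n; dim P₂(ker P₄) = dim ker P₄, and dim P₂(ker P₄) + r₄ = m. -/
lemma aux_stmt7 {K : Type*} [Field K] {a b c : ℕ}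
    (A : Matrix (Fin a) (Fin b) K) (B : Matrix (Fin c) (Fin b) K)
    (h : ∀ x, A.mulVec x = 0 → B.mulVec x = 0 → x = 0) :
    Module.finrank K ((LinearMap.ker A.mulVecLin).map B.mulVecLin) =
        Module.finrank K (LinearMap.ker A.mulVecLin) ∧
      Module.finrank K ((LinearMap.ker A.mulVecLin).map B.mulVecLin) + A.rank = b := by
  set S := LinearMap.ker A.mulVecLin
  have hinj : ∀ x ∈ S, B.mulVecLin x = 0 → x = 0 := by
    intro x hx hBx
    exact h x (by simpa [S, Matrix.mulVecLin_apply] using (LinearMap.mem_ker.mp hx))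
      (by simpa [Matrix.mulVecLin_apply] using hBx)
  have hker : LinearMap.ker (B.mulVecLin.domRestrict S) = ⊥ := by
    rw [LinearMap.ker_eq_bot']
    intro ⟨x, hx⟩ hx0
    exact Subtype.ext (hinj x hx (by simpa using hx0))
  have h1 : Module.finrank K (S.map B.mulVecLin) = Module.finrank K S := by
    rw [← LinearMap.range_domRestrict]
    have := LinearMap.finrank_range_add_finrank_ker (B.mulVecLin.domRestrict S)
    rw [hker, finrank_bot, add_zero] at this
    exact this
  refine ⟨h1, ?_⟩
  rw [h1]
  have := LinearMap.finrank_range_add_finrank_ker A.mulVecLin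
  simp only [Matrix.rank, S] at this ⊢
  rw [Module.finrank_fin_fun] at this
  omega

/-- Dimension formulas for images of kernels under the blocks of an invertible `P`:
`dim P₃(ker P₁) = dim ker P₁ = n - r₁`, `dim P₄(ker P₂) = dim ker P₂ = m - r₂`,
`dim P₁(ker P₃) = dim ker P₃ = n - r₃`, `dim P₂(ker P₄) = dim ker P₄ = m - r₄`. -/
theorem stmt_7 {K : Type*} [Field K] {m n : ℕ}
    (P₄ : Matrix (Fin m) (Fin m) K) (P₃ : Matrix (Fin m) (Fin n) K)
    (P₂ : Matrix (Fin n) (Fin m) K) (P₁ : Matrix (Fin n) (Fin n) K)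
    (hP : IsUnit (Matrix.fromBlocks P₄ P₃ P₂ P₁)) :
    (Module.finrank K ((LinearMap.ker P₁.mulVecLin).map P₃.mulVecLin) =
        Module.finrank K (LinearMap.ker P₁.mulVecLin) ∧
      Module.finrank K ((LinearMap.ker P₁.mulVecLin).map P₃.mulVecLin) + P₁.rank = n) ∧
    (Module.finrank K ((LinearMap.ker P₂.mulVecLin).map P₄.mulVecLin) =
        Module.finrank K (LinearMap.ker P₂.mulVecLin) ∧
      Module.finrank K ((LinearMap.ker P₂.mulVecLin).map P₄.mulVecLin) + P₂.rank = m) ∧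
    (Module.finrank K ((LinearMap.ker P₃.mulVecLin).map P₁.mulVecLin) =
        Module.finrank K (LinearMap.ker P₃.mulVecLin) ∧
      Module.finrank K ((LinearMap.ker P₃.mulVecLin).map P₁.mulVecLin) + P₃.rank = n) ∧
    (Module.finrank K ((LinearMap.ker P₄.mulVecLin).map P₂.mulVecLin) =
        Module.finrank K (LinearMap.ker P₄.mulVecLin) ∧
      Module.finrank K ((LinearMap.ker P₄.mulVecLin).map P₂.mulVecLin) + P₄.rank = m) := by
  have hinj : Function.Injective (Matrix.fromBlocks P₄ P₃ P₂ P₁).mulVec := by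
    intro x y hxy
    have h := hP
    obtain ⟨Q, hQ⟩ := isUnit_iff_exists_inv'.mp hP
    have : Q.mulVec ((Matrix.fromBlocks P₄ P₃ P₂ P₁).mulVec x)
        = Q.mulVec ((Matrix.fromBlocks P₄ P₃ P₂ P₁).mulVec y) := by rw [hxy]
    simpa [Matrix.mulVec_mulVec, hQ] using this
  have key : ∀ (x : Fin m → K) (y : Fin n → K),
      P₄.mulVec x + P₃.mulVec y = 0 → P₂.mulVec x + P₁.mulVec y = 0 → x = 0 ∧ y = 0 := by
    intro x y h1 h2
    have : (Matrix.fromBlocks P₄ P₃ P₂ P₁).mulVec (Sum.elim x y)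
        = (Matrix.fromBlocks P₄ P₃ P₂ P₁).mulVec 0 := by
      rw [Matrix.fromBlocks_mulVec, Matrix.mulVec_zero]
      simp only [Sum.elim_comp_inl, Sum.elim_comp_inr]
      rw [h1, h2]
      ext (i | i) <;> simp
    have h0 := hinj this
    constructor
    · funext i; exact congrFun h0 (Sum.inl i)
    · funext i; exact congrFun h0 (Sum.inr i)
  refine ⟨aux_stmt7 _ _ ?_, aux_stmt7 _ _ ?_, aux_stmt7 _ _ ?_, aux_stmt7 _ _ ?_⟩
  · intro y h1 h3
    exact (key 0 y (by simp [h3]) (by simp [h1])).2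
  · intro x h2 h4
    exact (key x 0 (by simp [h4]) (by simp [h2])).1
  · intro y h3 h1
    exact (key 0 y (by simp [h3]) (by simp [h1])).2
  · intro x h4 h2
    exact (key x 0 (by simp [h4]) (by simp [h2])).1
end

section
/- For the blocks of the invertible matrix P: dim(im P₁ ∩ im P₂) + n = r₁ + r₂ and dim(im P₃ ∩ im P₄) + m = r₃ + r₄. -/
open Matrix

private lemma aux_sup {K : Type*} [Field K] {m n k : ℕ}
    (A : Matrix (Fin n) (Fin k) K) (B : Matrix (Fin n) (Fin m) K)
    (h : ∀ y : Fin n → K, ∃ x₂ x₁, A.mulVec x₂ + B.mulVec x₁ = y) :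
    LinearMap.range A.mulVecLin ⊔ LinearMap.range B.mulVecLin = ⊤ := by
  rw [eq_top_iff]
  intro y _
  obtain ⟨x₂, x₁, hx⟩ := h y
  exact Submodule.mem_sup.mpr ⟨A.mulVec x₂, ⟨x₂, rfl⟩, B.mulVec x₁, ⟨x₁, rfl⟩, hx⟩

private lemma aux_count {K : Type*} [Field K] {n : ℕ}
    {s t : Submodule K (Fin n → K)} (h : s ⊔ t = ⊤) :
    Module.finrank K (s ⊓ t : Submodule K (Fin n → K)) + n
      = Module.finrank K s + Module.finrank K t := by
  have := Submodule.finrank_sup_add_finrank_inf_eq s t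
  rw [h] at this
  rw [← this, finrank_top, Module.finrank_fin_fun, add_comm]

/-- For the blocks of an invertible matrix `P`:
`dim (im P₁ ∩ im P₂) + n = r₁ + r₂` and `dim (im P₃ ∩ im P₄) + m = r₃ + r₄`. -/
theorem stmt_8 {K : Type*} [Field K] {m n : ℕ}
    (P₄ : Matrix (Fin m) (Fin m) K) (P₃ : Matrix (Fin m) (Fin n) K)
    (P₂ : Matrix (Fin n) (Fin m) K) (P₁ : Matrix (Fin n) (Fin n) K)
    (hP : IsUnit (Matrix.fromBlocks P₄ P₃ P₂ P₁)) :
    Module.finrank K (LinearMap.range P₁.mulVecLin ⊓ LinearMap.range P₂.mulVecLin : Submodule K (Fin n → K)) + n = P₁.rank + P₂.rank ∧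
    Module.finrank K (LinearMap.range P₃.mulVecLin ⊓ LinearMap.range P₄.mulVecLin : Submodule K (Fin m → K)) + m = P₃.rank + P₄.rank := by
  set P := Matrix.fromBlocks P₄ P₃ P₂ P₁ with hPdef
  have hdet : IsUnit P.det := (Matrix.isUnit_iff_isUnit_det P).mp hP
  have hsurj : ∀ v : (Fin m ⊕ Fin n) → K, P.mulVec (P⁻¹.mulVec v) = v := by
    intro v
    rw [Matrix.mulVec_mulVec, Matrix.mul_nonsing_inv P hdet, Matrix.one_mulVec]
  have key : ∀ v : (Fin m ⊕ Fin n) → K,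
      ∃ x₁ x₂, Sum.elim (P₄.mulVec x₁ + P₃.mulVec x₂) (P₂.mulVec x₁ + P₁.mulVec x₂) = v := by
    intro v
    refine ⟨(P⁻¹.mulVec v) ∘ Sum.inl, (P⁻¹.mulVec v) ∘ Sum.inr, ?_⟩
    have : Sum.elim ((P⁻¹.mulVec v) ∘ Sum.inl) ((P⁻¹.mulVec v) ∘ Sum.inr) = P⁻¹.mulVec v := by
      funext i; cases i <;> rfl
    have h2 := hsurj v
    rw [← this, hPdef, Matrix.fromBlocks_mulVec] at h2
    exact h2
  constructor
  · have hsup : LinearMap.range P₁.mulVecLin ⊔ LinearMap.range P₂.mulVecLin = ⊤ := by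
      apply aux_sup
      intro y
      obtain ⟨x₁, x₂, hx⟩ := key (Sum.elim 0 y)
      refine ⟨x₂, x₁, ?_⟩
      have := congrFun hx
      funext i
      have h := this (Sum.inr i)
      simpa [add_comm] using h
    rw [Matrix.rank, Matrix.rank]
    exact aux_count hsup
  · have hsup : LinearMap.range P₃.mulVecLin ⊔ LinearMap.range P₄.mulVecLin = ⊤ := by
      apply aux_sup
      intro y
      obtain ⟨x₁, x₂, hx⟩ := key (Sum.elim y 0)
      refine ⟨x₂, x₁, ?_⟩
      have := congrFun hx
      funext i
      have h := this (Sum.inl i)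
      simpa [add_comm] using h
    rw [Matrix.rank, Matrix.rank]
    exact aux_count hsup
end

section
/- Let C be a finite-dimensional vector space over a field K and let A, B be subspaces of C with dim A ≥ dim B. Then there exists a subspace S of C such that S ∩ A = {0}, S + A = C, and S ∩ B = {0}. -/
open Module Submodule

/-- Helper: if `S ⊓ (X ⊔ span {v}) = ⊥` and `v ∉ X`, then `(S ⊔ span {v}) ⊓ X = ⊥`. -/
lemma aux_inf_bot {K : Type*} [Field K] {C : Type*} [AddCommGroup C] [Module K C]
    (S X : Submodule K C) (v : C) (hv : v ∉ X)
    (hS : S ⊓ (X ⊔ Submodule.span K {v}) = ⊥) :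
    (S ⊔ Submodule.span K {v}) ⊓ X = ⊥ := by
  rw [eq_bot_iff]
  rintro x ⟨hx1, hx2⟩
  obtain ⟨s, hs, w, hw, rfl⟩ := Submodule.mem_sup.mp hx1
  obtain ⟨c, rfl⟩ := Submodule.mem_span_singleton.mp hw
  have hsX' : s ∈ X ⊔ Submodule.span K {v} := by
    have h1 : s + c • v ∈ X ⊔ Submodule.span K {v} := Submodule.mem_sup_left hx2
    have h2 : c • v ∈ X ⊔ Submodule.span K {v} :=
      Submodule.mem_sup_right (Submodule.smul_mem _ c (Submodule.mem_span_singleton_self v))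
    simpa using Submodule.sub_mem _ h1 h2
  have hs0 : s = 0 := by
    have : s ∈ S ⊓ (X ⊔ Submodule.span K {v}) := ⟨hs, hsX'⟩
    simpa [hS] using this
  subst hs0
  rw [zero_add] at hx2 ⊢
  rcases eq_or_ne c 0 with rfl | hc
  · simp
  · exact absurd (by simpa [inv_smul_smul₀ hc] using X.smul_mem c⁻¹ hx2) hv

lemma aux_main {K : Type*} [Field K] {C : Type*} [AddCommGroup C] [Module K C]
    [FiniteDimensional K C] (n : ℕ) :
    ∀ (A B : Submodule K C), finrank K B ≤ finrank K A → finrank K C ≤ finrank K A + n →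
    ∃ S : Submodule K C, S ⊓ A = ⊥ ∧ S ⊔ A = ⊤ ∧ S ⊓ B = ⊥ := by
  induction n with
  | zero =>
    intro A B hBA hC
    have hA : A = ⊤ := Submodule.eq_top_of_finrank_eq
      (le_antisymm (Submodule.finrank_le A) (by simpa using hC))
    exact ⟨⊥, by simp, by simp [hA], by simp⟩
  | succ n ih =>
    intro A B hBA hC
    by_cases hA : A = ⊤
    · exact ⟨⊥, by simp, by simp [hA], by simp⟩
    · have hAlt : A < ⊤ := lt_top_iff_ne_top.mpr hA
      have hAfr : finrank K A < finrank K C := Submodule.finrank_lt hAlt.ne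
      have hB : B ≠ ⊤ := by
        intro hB
        have : finrank K B = finrank K C := by rw [hB]; exact finrank_top K C
        omega
      -- find v ∉ A and v ∉ B
      obtain ⟨a, ha⟩ : ∃ a, a ∉ A := by
        by_contra h; push_neg at h; exact hA (Submodule.eq_top_iff'.mpr h)
      obtain ⟨b, hb⟩ : ∃ b, b ∉ B := by
        by_contra h; push_neg at h; exact hB (Submodule.eq_top_iff'.mpr h)
      obtain ⟨v, hvA, hvB⟩ : ∃ v, v ∉ A ∧ v ∉ B := by
        by_cases haB : a ∉ B
        · exact ⟨a, ha, haB⟩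
        by_cases hbA : b ∉ A
        · exact ⟨b, hbA, hb⟩
        push_neg at haB hbA
        refine ⟨a + b, fun hmem => ha ?_, fun hmem => hb ?_⟩
        · simpa using A.sub_mem hmem hbA
        · simpa using B.sub_mem hmem haB
      set A' := A ⊔ Submodule.span K {v} with hA'def
      set B' := B ⊔ Submodule.span K {v} with hB'def
      have hvne : v ≠ 0 := fun h => hvA (h ▸ A.zero_mem)
      have hltA : A < A' := lt_of_le_of_ne le_sup_left (fun h => hvA
        (h ▸ Submodule.mem_sup_right (Submodule.mem_span_singleton_self v)))
      have hfrA' : finrank K A + 1 ≤ finrank K A' :=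
        Submodule.finrank_lt_finrank_of_lt hltA
      have hfrB' : finrank K B' ≤ finrank K B + 1 := by
        rw [hB'def]
        have := Submodule.finrank_sup_add_finrank_inf_eq B (Submodule.span K {v})
        have hspan : finrank K (Submodule.span K {v}) = 1 := finrank_span_singleton hvne
        omega
      obtain ⟨S, hS1, hS2, hS3⟩ := ih A' B' (by omega) (by omega)
      refine ⟨S ⊔ Submodule.span K {v}, aux_inf_bot S A v hvA hS1, ?_,
        aux_inf_bot S B v hvB hS3⟩
      rw [sup_assoc, sup_comm (Submodule.span K {v}) A, ← hA'def, hS2]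

/-- Double complement lemma: if `A`, `B` are subspaces of a finite-dimensional
vector space `C` with `dim A ≥ dim B`, then there is a subspace `S` with
`S ∩ A = {0}`, `S + A = C`, and `S ∩ B = {0}`. -/
theorem stmt_9 {K : Type*} [Field K] {C : Type*} [AddCommGroup C] [Module K C]
    [FiniteDimensional K C] (A B : Submodule K C)
    (h : Module.finrank K A ≥ Module.finrank K B) :
    ∃ S : Submodule K C, S ⊓ A = ⊥ ∧ S ⊔ A = ⊤ ∧ S ⊓ B = ⊥ := by
  exact aux_main (Module.finrank K C) A B h (by omega)
end

section
/- Let L be an n×m matrix over K. There exist matrices C₄, C₃, C₁ and an n×m matrix R such that (L, C₄, C₃, C₁, R) is a decomposition (3) of P if and only if the n×n matrix P₁ − L·P₃ is invertible. -/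
/-- Lemma (characterization of decompositions): a decomposition (3) of `P` with
left factor `L` exists if and only if `P₁ - L·P₃` is invertible. -/
theorem stmt_10 {K : Type*} [Field K] {m n : ℕ}
    (P₄ : Matrix (Fin m) (Fin m) K) (P₃ : Matrix (Fin m) (Fin n) K)
    (P₂ : Matrix (Fin n) (Fin m) K) (P₁ : Matrix (Fin n) (Fin n) K)
    (hP : IsUnit (Matrix.fromBlocks P₄ P₃ P₂ P₁))
    (L : Matrix (Fin n) (Fin m) K) :
    (∃ (C₄ : Matrix (Fin m) (Fin m) K) (C₃ : Matrix (Fin m) (Fin n) K)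
      (C₁ : Matrix (Fin n) (Fin n) K) (R : Matrix (Fin n) (Fin m) K),
      Matrix.fromBlocks P₄ P₃ P₂ P₁ =
        Matrix.fromBlocks 1 0 L 1 * Matrix.fromBlocks C₄ C₃ 0 C₁ *
          Matrix.fromBlocks 1 0 R 1) ↔ IsUnit (P₁ - L * P₃) := by
  constructor
  · rintro ⟨C₄, C₃, C₁, R, heq⟩
    have heq' := heq
    rw [Matrix.fromBlocks_multiply, Matrix.fromBlocks_multiply] at heq'
    simp only [Matrix.one_mul, Matrix.mul_one, Matrix.zero_mul, Matrix.mul_zero,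
      add_zero, zero_add] at heq'
    rw [Matrix.fromBlocks_inj] at heq'
    obtain ⟨h4, h3, h2, h1⟩ := heq'
    have hC1 : P₁ - L * P₃ = C₁ := by rw [h1, h3]; noncomm_ring
    -- the two triangular factors are units
    have huL : IsUnit (Matrix.fromBlocks (1 : Matrix (Fin m) (Fin m) K) 0 L 1) :=
      ⟨⟨Matrix.fromBlocks 1 0 L 1, Matrix.fromBlocks 1 0 (-L) 1,
        by rw [Matrix.fromBlocks_multiply]; simp,
        by rw [Matrix.fromBlocks_multiply]; simp⟩, rfl⟩
    have huR : IsUnit (Matrix.fromBlocks (1 : Matrix (Fin m) (Fin m) K) 0 R 1) :=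
      ⟨⟨Matrix.fromBlocks 1 0 R 1, Matrix.fromBlocks 1 0 (-R) 1,
        by rw [Matrix.fromBlocks_multiply]; simp,
        by rw [Matrix.fromBlocks_multiply]; simp⟩, rfl⟩
    -- the middle factor is a unit
    have hmid : IsUnit (Matrix.fromBlocks C₄ C₃ 0 C₁) := by
      have key : Matrix.fromBlocks C₄ C₃ 0 C₁ =
          (huL.unit⁻¹).val * Matrix.fromBlocks P₄ P₃ P₂ P₁ * (huR.unit⁻¹).val := by
        rw [heq]
        calc Matrix.fromBlocks C₄ C₃ 0 C₁
            = 1 * Matrix.fromBlocks C₄ C₃ 0 C₁ * 1 := by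
              rw [Matrix.one_mul, Matrix.mul_one]
          _ = ((huL.unit⁻¹).val * Matrix.fromBlocks 1 0 L 1) * Matrix.fromBlocks C₄ C₃ 0 C₁ *
              (Matrix.fromBlocks 1 0 R 1 * (huR.unit⁻¹).val) := by
              rw [show ((huL.unit⁻¹).val : Matrix (Fin m ⊕ Fin n) (Fin m ⊕ Fin n) K) *
                    Matrix.fromBlocks 1 0 L 1 = 1 by
                  simpa using huL.unit.inv_mul,
                show (Matrix.fromBlocks (1 : Matrix (Fin m) (Fin m) K) 0 R 1) *
                    (huR.unit⁻¹).val = 1 by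
                  simpa using huR.unit.mul_inv]
          _ = (huL.unit⁻¹).val * (Matrix.fromBlocks 1 0 L 1 * Matrix.fromBlocks C₄ C₃ 0 C₁ *
              Matrix.fromBlocks 1 0 R 1) * (huR.unit⁻¹).val := by
              noncomm_ring
      rw [key]
      exact (huL.unit⁻¹.isUnit.mul hP).mul huR.unit⁻¹.isUnit
    have hdetmid := (Matrix.isUnit_iff_isUnit_det _).mp hmid
    rw [Matrix.det_fromBlocks_zero₂₁] at hdetmid
    rw [hC1]
    exact (Matrix.isUnit_iff_isUnit_det _).mpr (isUnit_of_mul_isUnit_right hdetmid)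
  · intro hinv
    have hdet : IsUnit (P₁ - L * P₃).det := (Matrix.isUnit_iff_isUnit_det _).mp hinv
    obtain ⟨X, hcr⟩ : ∃ X : Matrix (Fin n) (Fin m) K,
        (P₁ - L * P₃) * X = P₂ - L * P₄ :=
      ⟨(P₁ - L * P₃)⁻¹ * (P₂ - L * P₄),
        by rw [← Matrix.mul_assoc, Matrix.mul_nonsing_inv _ hdet, Matrix.one_mul]⟩
    refine ⟨P₄ - P₃ * X, P₃, P₁ - L * P₃, X, ?_⟩
    rw [Matrix.fromBlocks_multiply, Matrix.fromBlocks_multiply]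
    simp only [Matrix.one_mul, Matrix.mul_one, Matrix.zero_mul, Matrix.mul_zero,
      add_zero, zero_add]
    rw [Matrix.fromBlocks_inj]
    refine ⟨by noncomm_ring, rfl, ?_, by noncomm_ring⟩
    rw [show L * (P₄ - P₃ * X) + (L * P₃ + (P₁ - L * P₃)) * X =
        L * P₄ + (P₁ - L * P₃) * X from by
      rw [Matrix.mul_sub, Matrix.add_mul, ← Matrix.mul_assoc]; abel, hcr]
    noncomm_ring
end

section
/- Let L be an n×m matrix over K such that rank L + r₁ = n and such that the subspaces im P₁ and (L·P₃)(ker P₁) of Kⁿ satisfy im P₁ ∩ (L·P₃)(ker P₁) = {0} and im P₁ + (L·P₃)(ker P₁) = Kⁿ. Then P₁ − L·P₃ is invertible. -/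
/-- Lemma: if `rank L = n - r₁` and `im P₁ ⊕ (L·P₃)(ker P₁) = Kⁿ`,
then `P₁ - L·P₃` is invertible. -/
theorem stmt_12 {K : Type*} [Field K] {m n : ℕ}
    (P₄ : Matrix (Fin m) (Fin m) K) (P₃ : Matrix (Fin m) (Fin n) K)
    (P₂ : Matrix (Fin n) (Fin m) K) (P₁ : Matrix (Fin n) (Fin n) K)
    (hP : IsUnit (Matrix.fromBlocks P₄ P₃ P₂ P₁))
    (L : Matrix (Fin n) (Fin m) K)
    (hrk : L.rank + P₁.rank = n)
    (hinf : LinearMap.range P₁.mulVecLin ⊓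
      (LinearMap.ker P₁.mulVecLin).map (L * P₃).mulVecLin = ⊥)
    (hsup : LinearMap.range P₁.mulVecLin ⊔
      (LinearMap.ker P₁.mulVecLin).map (L * P₃).mulVecLin = ⊤) :
    IsUnit (P₁ - L * P₃) := by
  classical
  set B := P₁.mulVecLin with hB
  set A := (L * P₃).mulVecLin with hA
  set S := (LinearMap.ker B).map A with hS
  have hdim : Module.finrank K (Fin n → K) = n := by simp
  have hsum : Module.finrank K (LinearMap.range B) + Module.finrank K S = n := by
    have := Submodule.finrank_sup_add_finrank_inf_eq (LinearMap.range B) S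
    rw [hsup, hinf] at this
    simpa [hdim] using this.symm
  have hrn : Module.finrank K (LinearMap.range B) + Module.finrank K (LinearMap.ker B) = n := by
    simpa [hdim] using LinearMap.finrank_range_add_finrank_ker B
  have hrankB : Module.finrank K (LinearMap.range B) = P₁.rank := rfl
  have hSdim : Module.finrank K S = Module.finrank K (LinearMap.ker B) := by omega
  -- A is injective on ker B
  have hresrange : LinearMap.range (A.domRestrict (LinearMap.ker B)) = S :=
    LinearMap.range_domRestrict _ _
  have hresinj : ∀ x ∈ LinearMap.ker B, A x = 0 → x = 0 := by
    have h2 : Module.finrank K (LinearMap.range (A.domRestrict (LinearMap.ker B)))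
        + Module.finrank K (LinearMap.ker (A.domRestrict (LinearMap.ker B)))
        = Module.finrank K (LinearMap.ker B) :=
      LinearMap.finrank_range_add_finrank_ker _
    rw [hresrange, hSdim] at h2
    have hker0 : Module.finrank K (LinearMap.ker (A.domRestrict (LinearMap.ker B))) = 0 := by
      omega
    have hkerbot := Submodule.finrank_eq_zero.mp hker0
    intro x hx hAx
    have : (⟨x, hx⟩ : LinearMap.ker B) ∈ LinearMap.ker (A.domRestrict (LinearMap.ker B)) := by
      simpa [LinearMap.mem_ker, LinearMap.domRestrict_apply] using hAx
    rw [hkerbot, Submodule.mem_bot] at this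
    simpa using congrArg Subtype.val this
  -- range A = S
  have hSle : S ≤ LinearMap.range A := LinearMap.map_le_range
  have hrankA : Module.finrank K (LinearMap.range A) ≤ Module.finrank K S := by
    have h1 : (L * P₃).rank ≤ L.rank := Matrix.rank_mul_le_left L P₃
    have h2 : Module.finrank K (LinearMap.range A) = (L * P₃).rank := rfl
    omega
  have hrangeA : S = LinearMap.range A := Submodule.eq_of_le_of_finrank_le hSle hrankA
  -- injectivity of B - A
  have hinj : ∀ v : Fin n → K, (P₁ - L * P₃).mulVec v = 0 → v = 0 := by
    intro v hv
    have hBA : B v = A v := by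
      have hsub : B v - A v = 0 := by
        simpa [hB, hA, Matrix.sub_mulVec, Matrix.mulVecLin_apply] using hv
      exact sub_eq_zero.mp hsub
    have hmem : B v ∈ LinearMap.range B ⊓ S := by
      refine ⟨LinearMap.mem_range_self _ _, ?_⟩
      rw [hrangeA, hBA]
      exact LinearMap.mem_range_self _ _
    rw [hinf, Submodule.mem_bot] at hmem
    have hAv : A v = 0 := by rw [← hBA]; exact hmem
    exact hresinj v (by simpa [LinearMap.mem_ker] using hmem) hAv
  -- conclude
  rw [Matrix.isUnit_iff_isUnit_det, isUnit_iff_ne_zero]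
  intro hdet
  obtain ⟨v, hv0, hv⟩ := (Matrix.exists_mulVec_eq_zero_iff).mpr hdet
  exact hv0 (hinj v hv)
end

section
/- Let L be an n×m matrix over K such that for every vector v in im P₄ there exists u ∈ Kᵐ with P₄u = v and Lv = P₂u (i.e., Lv ∈ P₂(P₄⁻¹({v}))). Then rank(P₂ − L·P₄) + r₄ = m. -/
/-- Lemma: if for every `v ∈ im P₄` we have `Lv ∈ P₂(P₄⁻¹({v}))`, then
`rank (P₂ - L·P₄) = m - r₄`. -/
theorem stmt_13 {K : Type*} [Field K] {m n : ℕ}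
    (P₄ : Matrix (Fin m) (Fin m) K) (P₃ : Matrix (Fin m) (Fin n) K)
    (P₂ : Matrix (Fin n) (Fin m) K) (P₁ : Matrix (Fin n) (Fin n) K)
    (hP : IsUnit (Matrix.fromBlocks P₄ P₃ P₂ P₁))
    (L : Matrix (Fin n) (Fin m) K)
    (hL : ∀ v ∈ LinearMap.range P₄.mulVecLin,
      ∃ u : Fin m → K, P₄.mulVec u = v ∧ L.mulVec v = P₂.mulVec u) :
    (P₂ - L * P₄).rank + P₄.rank = m := by
  classical
  set S : Submodule K (Fin m → K) := LinearMap.ker P₄.mulVecLin with hS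
  -- injectivity of P₂ on ker P₄
  have hinj : ∀ u, P₄.mulVec u = 0 → P₂.mulVec u = 0 → u = 0 := by
    intro u h4 h2
    have hbig : (Matrix.fromBlocks P₄ P₃ P₂ P₁).mulVec (Sum.elim u 0) = 0 := by
      rw [Matrix.fromBlocks_mulVec]
      simp [h4, h2]
    have hinj' : Function.Injective (Matrix.fromBlocks P₄ P₃ P₂ P₁).mulVec :=
      Matrix.mulVec_injective_iff_isUnit.2 hP
    have h0 : (Sum.elim u 0 : Fin m ⊕ Fin n → K) = 0 := by
      apply hinj'
      simpa [Matrix.mulVec_zero] using hbig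
    funext i
    have := congrFun h0 (Sum.inl i)
    simpa using this
  -- range of Q equals P₂(ker P₄)
  have hrange : LinearMap.range (P₂ - L * P₄).mulVecLin = S.map P₂.mulVecLin := by
    apply le_antisymm
    · rintro _ ⟨u, rfl⟩
      obtain ⟨u', hu', hLu'⟩ := hL (P₄.mulVec u) ⟨u, rfl⟩
      refine ⟨u - u', ?_, ?_⟩
      · simp [hS, LinearMap.mem_ker, Matrix.mulVec_sub, hu']
      · simp only [Matrix.mulVecLin_apply, Matrix.sub_mulVec, Matrix.mulVec_sub,
          ← Matrix.mulVec_mulVec, hLu', hu']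
    · rintro _ ⟨u, hu, rfl⟩
      refine ⟨u, ?_⟩
      have hu0 : P₄.mulVec u = 0 := hu
      simp [Matrix.mulVecLin_apply, Matrix.sub_mulVec, ← Matrix.mulVec_mulVec, hu0]
  -- finrank of the mapped submodule equals finrank of S
  have hker : LinearMap.ker (P₂.mulVecLin.domRestrict S) = ⊥ := by
    rw [LinearMap.ker_eq_bot']
    rintro ⟨u, hu⟩ h
    have h2 : P₂.mulVec u = 0 := by simpa using h
    have h4 : P₄.mulVec u = 0 := hu
    exact Subtype.ext (hinj u h4 h2)
  have hfr : Module.finrank K (S.map P₂.mulVecLin) = Module.finrank K S := by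
    rw [← LinearMap.range_domRestrict]
    have := LinearMap.finrank_range_add_finrank_ker (P₂.mulVecLin.domRestrict S)
    rw [hker, finrank_bot, add_zero] at this
    exact this
  have hrn := LinearMap.finrank_range_add_finrank_ker P₄.mulVecLin
  rw [Matrix.rank, Matrix.rank, hrange, hfr, add_comm]
  rw [hS]; simpa using hrn
end

section
/- Let Y be a subspace of Kⁿ with Y ∩ im P₁ = {0} and Y + im P₁ = Kⁿ, and let T be a subspace of im P₄ with T ∩ P₄(ker P₂) = {0} and T + P₄(ker P₂) = im P₄. Let L be an n×m matrix over K satisfying: im L = Y; (L·P₃)(ker P₁) = Y; for every v ∈ T there exists u ∈ Kᵐ with P₄u = v and Lv = P₂u; and Lw = 0 for every w ∈ P₄(ker P₂). Then P₁ − L·P₃ is invertible, rank L + r₁ = n, and rank(P₂ − L·P₄) + r₄ = m. -/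
/-- Lemma (sufficient conditions, case `r₂ ≤ m + n - r₁ - r₄`): if `Y` is a
complement of `im P₁` in `Kⁿ`, `T` is a complement of `P₄(ker P₂)` in `im P₄`,
and `L` satisfies `im L = Y`, `(L·P₃)(ker P₁) = Y`, `Lv ∈ P₂(P₄⁻¹({v}))` for all
`v ∈ T` and `L(P₄(ker P₂)) = {0}`, then `P₁ - L·P₃` is invertible,
`rank L = n - r₁` and `rank (P₂ - L·P₄) = m - r₄`. -/
theorem stmt_14 {K : Type*} [Field K] {m n : ℕ}
    (P₄ : Matrix (Fin m) (Fin m) K) (P₃ : Matrix (Fin m) (Fin n) K)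
    (P₂ : Matrix (Fin n) (Fin m) K) (P₁ : Matrix (Fin n) (Fin n) K)
    (hP : IsUnit (Matrix.fromBlocks P₄ P₃ P₂ P₁))
    (Y : Submodule K (Fin n → K))
    (hY₁ : Y ⊓ LinearMap.range P₁.mulVecLin = ⊥)
    (hY₂ : Y ⊔ LinearMap.range P₁.mulVecLin = ⊤)
    (T : Submodule K (Fin m → K))
    (hT₁ : T ⊓ (LinearMap.ker P₂.mulVecLin).map P₄.mulVecLin = ⊥)
    (hT₂ : T ⊔ (LinearMap.ker P₂.mulVecLin).map P₄.mulVecLin =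
      LinearMap.range P₄.mulVecLin)
    (L : Matrix (Fin n) (Fin m) K)
    (hL₁ : LinearMap.range L.mulVecLin = Y)
    (hL₂ : (LinearMap.ker P₁.mulVecLin).map (L * P₃).mulVecLin = Y)
    (hL₃ : ∀ v ∈ T, ∃ u : Fin m → K, P₄.mulVec u = v ∧ L.mulVec v = P₂.mulVec u)
    (hL₄ : ∀ w ∈ (LinearMap.ker P₂.mulVecLin).map P₄.mulVecLin,
      L.mulVec w = 0) :
    IsUnit (P₁ - L * P₃) ∧ L.rank + P₁.rank = n ∧
      (P₂ - L * P₄).rank + P₄.rank = m := by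
  classical
  -- dim Y + rank P₁ = n
  have hrankL : L.rank = Module.finrank K Y := by
    rw [Matrix.rank, hL₁]
  have hdimY : Module.finrank K Y + P₁.rank = n := by
    have := Submodule.finrank_sup_add_finrank_inf_eq Y (LinearMap.range P₁.mulVecLin)
    rw [hY₁, hY₂] at this
    simpa [Matrix.rank, Module.finrank_fin_fun] using this.symm
  -- Claim 2
  have claim2 : L.rank + P₁.rank = n := by rw [hrankL]; exact hdimY
  -- dim ker P₁ = dim Y
  have hkerP₁ : Module.finrank K (LinearMap.ker P₁.mulVecLin) = Module.finrank K Y := by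
    have h1 := LinearMap.finrank_range_add_finrank_ker P₁.mulVecLin
    rw [Module.finrank_fin_fun] at h1
    have : Module.finrank K (LinearMap.range P₁.mulVecLin) = P₁.rank := rfl
    omega
  -- injectivity of L*P₃ on ker P₁
  have hinj : ∀ x ∈ LinearMap.ker P₁.mulVecLin, (L * P₃).mulVec x = 0 → x = 0 := by
    set g := (L * P₃).mulVecLin.domRestrict (LinearMap.ker P₁.mulVecLin) with hg
    have hrg : LinearMap.range g = Y := by
      rw [hg, LinearMap.range_domRestrict, hL₂]
    have hkg : Module.finrank K (LinearMap.ker g) = 0 := by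
      have := LinearMap.finrank_range_add_finrank_ker g
      rw [hrg, hkerP₁] at this
      omega
    have hkgbot : LinearMap.ker g = ⊥ := Submodule.finrank_eq_zero.mp hkg
    intro x hx h0
    have : (⟨x, hx⟩ : LinearMap.ker P₁.mulVecLin) ∈ LinearMap.ker g := by
      simp only [hg, LinearMap.mem_ker, LinearMap.domRestrict_apply]
      exact h0
    rw [hkgbot, Submodule.mem_bot] at this
    exact congrArg Subtype.val this
  -- Claim 1
  have claim1 : IsUnit (P₁ - L * P₃) := by
    rw [Matrix.isUnit_iff_isUnit_det, isUnit_iff_ne_zero]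
    intro hdet
    obtain ⟨v, hv0, hv⟩ := Matrix.exists_mulVec_eq_zero_iff.mpr hdet
    have heq : P₁.mulVec v = (L * P₃).mulVec v := by
      have h := hv
      rw [Matrix.sub_mulVec] at h
      exact sub_eq_zero.mp h
    have hmem : P₁.mulVec v ∈ Y ⊓ LinearMap.range P₁.mulVecLin := by
      constructor
      · rw [heq, ← hL₁]
        refine ⟨P₃.mulVec v, ?_⟩
        simp [Matrix.mulVecLin_apply, Matrix.mulVec_mulVec]
      · exact ⟨v, rfl⟩
    rw [hY₁, Submodule.mem_bot] at hmem
    have hvk : v ∈ LinearMap.ker P₁.mulVecLin := hmem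
    exact hv0 (hinj v hvk (by rw [← heq, hmem]))
  -- Claim 3 : range (P₂ - L*P₄) = P₂ (ker P₄)
  have hker24 : LinearMap.ker P₄.mulVecLin ⊓ LinearMap.ker P₂.mulVecLin = ⊥ := by
    rw [Submodule.eq_bot_iff]
    rintro u ⟨h4, h2⟩
    have hPinj : Function.Injective (Matrix.fromBlocks P₄ P₃ P₂ P₁).mulVecLin := by
      have := (Matrix.isUnit_iff_isUnit_det _).mp hP
      intro a b hab
      have : (Matrix.fromBlocks P₄ P₃ P₂ P₁).mulVec a = (Matrix.fromBlocks P₄ P₃ P₂ P₁).mulVec b := hab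
      have hsub : (Matrix.fromBlocks P₄ P₃ P₂ P₁).mulVec (a - b) = 0 := by
        rw [Matrix.mulVec_sub, this, sub_self]
      by_contra hne
      have : a - b ≠ 0 := sub_ne_zero.mpr hne
      have hdet0 := Matrix.exists_mulVec_eq_zero_iff.mp ⟨a - b, this, hsub⟩
      exact ((Matrix.isUnit_iff_isUnit_det _).mp hP).ne_zero hdet0
    -- embed u as (u, 0) in Fin (m+n)? use Sum type
    have h0 : (Matrix.fromBlocks P₄ P₃ P₂ P₁).mulVec (Sum.elim u 0) = 0 := by
      funext i
      cases i with
      | inl i =>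
        have : P₄.mulVec u = 0 := h4
        simp [Matrix.fromBlocks_mulVec, this]
      | inr i =>
        have : P₂.mulVec u = 0 := h2
        simp [Matrix.fromBlocks_mulVec, this]
    have := hPinj (a₁ := Sum.elim u 0) (a₂ := 0) (by simpa using h0)
    have hu : u = 0 := by
      funext i
      exact congrFun this (Sum.inl i)
    simp [hu]
  have hrange3 : LinearMap.range (P₂ - L * P₄).mulVecLin
      = (LinearMap.ker P₄.mulVecLin).map P₂.mulVecLin := by
    apply le_antisymm
    · rintro _ ⟨u, rfl⟩
      have hmem : P₄.mulVec u ∈ T ⊔ (LinearMap.ker P₂.mulVecLin).map P₄.mulVecLin := by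
        rw [hT₂]; exact ⟨u, rfl⟩
      obtain ⟨v, hv, w, hw, hvw⟩ := Submodule.mem_sup.mp hmem
      obtain ⟨u', hu'1, hu'2⟩ := hL₃ v hv
      obtain ⟨z, hz, hzw⟩ := hw
      have hzw' : P₄.mulVec z = w := hzw
      have hz' : P₂.mulVec z = 0 := hz
      refine ⟨u - u' - z, ?_, ?_⟩
      · show P₄.mulVec (u - u' - z) = 0
        rw [Matrix.mulVec_sub, Matrix.mulVec_sub, hu'1, hzw', ← hvw]
        abel
      · show P₂.mulVec (u - u' - z) = (P₂ - L * P₄).mulVec u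
        rw [Matrix.mulVec_sub, Matrix.mulVec_sub, hz', Matrix.sub_mulVec, sub_zero]
        have hLP₄ : (L * P₄).mulVec u = L.mulVec (P₄.mulVec u) := by
          rw [Matrix.mulVec_mulVec]
        rw [hLP₄, ← hvw, Matrix.mulVec_add, hu'2, hL₄ w ⟨z, hz, hzw⟩, add_zero]
    · rintro _ ⟨u, hu, rfl⟩
      have hu' : P₄.mulVec u = 0 := hu
      refine ⟨u, ?_⟩
      show (P₂ - L * P₄).mulVec u = P₂.mulVec u
      rw [Matrix.sub_mulVec, ← Matrix.mulVec_mulVec, hu', Matrix.mulVec_zero, sub_zero]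
  have claim3 : (P₂ - L * P₄).rank + P₄.rank = m := by
    have hmap : Module.finrank K ((LinearMap.ker P₄.mulVecLin).map P₂.mulVecLin)
        = Module.finrank K (LinearMap.ker P₄.mulVecLin) := by
      set g := P₂.mulVecLin.domRestrict (LinearMap.ker P₄.mulVecLin) with hg
      have hrg : LinearMap.range g = (LinearMap.ker P₄.mulVecLin).map P₂.mulVecLin :=
        LinearMap.range_domRestrict _ _
      have hkg : LinearMap.ker g = ⊥ := by
        rw [Submodule.eq_bot_iff]
        rintro ⟨x, hx⟩ hxk
        have hx2 : P₂.mulVec x = 0 := hxk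
        have : x ∈ LinearMap.ker P₄.mulVecLin ⊓ LinearMap.ker P₂.mulVecLin := ⟨hx, hx2⟩
        rw [hker24, Submodule.mem_bot] at this
        simp [this]
      have := LinearMap.finrank_range_add_finrank_ker g
      rw [hrg, hkg] at this
      simpa using this
    have h4 := LinearMap.finrank_range_add_finrank_ker P₄.mulVecLin
    rw [Module.finrank_fin_fun] at h4
    have hr3 : (P₂ - L * P₄).rank = Module.finrank K (LinearMap.ker P₄.mulVecLin) := by
      rw [Matrix.rank, hrange3, hmap]
    have hr4 : Module.finrank K (LinearMap.range P₄.mulVecLin) = P₄.rank := rfl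
    omega
  exact ⟨claim1, claim2, claim3⟩
end

section
/- Let T be a subspace of Kᵐ with T ∩ P₄(ker P₂) = {0} and T + P₄(ker P₂) = im P₄, and let V be a subspace of Kⁿ with V ∩ P₂(ker P₄) = {0} and V + P₂(ker P₄) = im P₂. Let F = P₄⁻¹(T) ∩ P₂⁻¹(V) (the intersection of the preimage subspaces). Then the restriction of the linear map x ↦ P₄x to F is a bijection from F onto T, the restriction of x ↦ P₂x to F is a bijection from F onto V, and consequently the map f : T → V defined by f(P₄v) = P₂v for all v ∈ F is a well-defined linear isomorphism. -/
/-- Lemma (building the bijection): let `T` be a complement of `P₄(ker P₂)` in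
`im P₄`, `V` a complement of `P₂(ker P₄)` in `im P₂`, and
`F = P₄⁻¹(T) ∩ P₂⁻¹(V)`. Then `x ↦ P₄x` restricted to `F` is a bijection onto
`T`, `x ↦ P₂x` restricted to `F` is a bijection onto `V`, and the map
`f : T → V` defined by `f(P₄v) = P₂v` for `v ∈ F` is a well-defined linear
isomorphism. -/
theorem stmt_15 {K : Type*} [Field K] {m n : ℕ}
    (P₄ : Matrix (Fin m) (Fin m) K) (P₃ : Matrix (Fin m) (Fin n) K)
    (P₂ : Matrix (Fin n) (Fin m) K) (P₁ : Matrix (Fin n) (Fin n) K)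
    (hP : IsUnit (Matrix.fromBlocks P₄ P₃ P₂ P₁))
    (T : Submodule K (Fin m → K))
    (hT₁ : T ⊓ (LinearMap.ker P₂.mulVecLin).map P₄.mulVecLin = ⊥)
    (hT₂ : T ⊔ (LinearMap.ker P₂.mulVecLin).map P₄.mulVecLin =
      LinearMap.range P₄.mulVecLin)
    (V : Submodule K (Fin n → K))
    (hV₁ : V ⊓ (LinearMap.ker P₄.mulVecLin).map P₂.mulVecLin = ⊥)
    (hV₂ : V ⊔ (LinearMap.ker P₄.mulVecLin).map P₂.mulVecLin =
      LinearMap.range P₂.mulVecLin)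
    (F : Submodule K (Fin m → K))
    (hF : F = T.comap P₄.mulVecLin ⊓ V.comap P₂.mulVecLin) :
    Set.BijOn P₄.mulVec (F : Set (Fin m → K)) (T : Set (Fin m → K)) ∧
    Set.BijOn P₂.mulVec (F : Set (Fin m → K)) (V : Set (Fin n → K)) ∧
    ∃ f : T ≃ₗ[K] V, ∀ v ∈ F, ∀ hv : P₄.mulVec v ∈ T,
      (f ⟨P₄.mulVec v, hv⟩ : Fin n → K) = P₂.mulVec v := by
  have hmemF : ∀ v, v ∈ F ↔ P₄.mulVec v ∈ T ∧ P₂.mulVec v ∈ V := by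
    intro v
    simp [hF, Submodule.mem_inf, Submodule.mem_comap]
  have hker : ∀ x : Fin m → K, P₄.mulVec x = 0 → P₂.mulVec x = 0 → x = 0 := by
    intro x h4 h2
    have hinj : Function.Injective (Matrix.fromBlocks P₄ P₃ P₂ P₁).mulVec :=
      Matrix.mulVec_injective_iff_isUnit.2 hP
    have h0 : (Matrix.fromBlocks P₄ P₃ P₂ P₁).mulVec (Sum.elim x 0) =
        (Matrix.fromBlocks P₄ P₃ P₂ P₁).mulVec 0 := by
      rw [Matrix.fromBlocks_mulVec, Matrix.mulVec_zero]
      simp [h4, h2]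
    have := hinj h0
    funext i
    exact congrFun this (Sum.inl i)
  -- zero kernels of restrictions
  have hz4 : ∀ v ∈ F, P₄.mulVec v = 0 → v = 0 := by
    intro v hv h4
    have h2V : P₂.mulVec v ∈ V := ((hmemF v).1 hv).2
    have h2M : P₂.mulVec v ∈ (LinearMap.ker P₄.mulVecLin).map P₂.mulVecLin := by
      exact Submodule.mem_map_of_mem (by simpa [LinearMap.mem_ker] using h4)
    have : P₂.mulVec v ∈ V ⊓ (LinearMap.ker P₄.mulVecLin).map P₂.mulVecLin := ⟨h2V, h2M⟩
    rw [hV₁] at this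
    exact hker v h4 (by simpa using this)
  have hz2 : ∀ v ∈ F, P₂.mulVec v = 0 → v = 0 := by
    intro v hv h2
    have h4T : P₄.mulVec v ∈ T := ((hmemF v).1 hv).1
    have h4M : P₄.mulVec v ∈ (LinearMap.ker P₂.mulVecLin).map P₄.mulVecLin := by
      exact Submodule.mem_map_of_mem (by simpa [LinearMap.mem_ker] using h2)
    have : P₄.mulVec v ∈ T ⊓ (LinearMap.ker P₂.mulVecLin).map P₄.mulVecLin := ⟨h4T, h4M⟩
    rw [hT₁] at this
    exact hker v (by simpa using this) h2
  -- surjectivity onto T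
  have hsurjT : ∀ t ∈ T, ∃ v ∈ F, P₄.mulVec v = t := by
    intro t ht
    have htr : t ∈ LinearMap.range P₄.mulVecLin := by
      rw [← hT₂]; exact Submodule.mem_sup_left ht
    obtain ⟨u, hu⟩ := htr
    have h2u : P₂.mulVec u ∈ V ⊔ (LinearMap.ker P₄.mulVecLin).map P₂.mulVecLin := by
      rw [hV₂]; exact ⟨u, rfl⟩
    rw [Submodule.mem_sup] at h2u
    obtain ⟨v', hv', p, hp, hsum⟩ := h2u
    obtain ⟨w, hw, hwp⟩ := hp
    refine ⟨u - w, ?_, ?_⟩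
    · rw [hmemF]
      have e4 : P₄.mulVec (u - w) = t := by
        have : P₄.mulVecLin (u - w) = t := by
          rw [map_sub, hu, LinearMap.mem_ker.1 hw, sub_zero]
        simpa using this
      have e2 : P₂.mulVec (u - w) = v' := by
        have : P₂.mulVecLin (u - w) = v' := by
          rw [map_sub, hwp]
          have : P₂.mulVecLin u = v' + p := hsum.symm
          rw [this]; abel
        simpa using this
      rw [e4, e2]; exact ⟨ht, hv'⟩
    · have : P₄.mulVecLin (u - w) = t := by
        rw [map_sub, hu, LinearMap.mem_ker.1 hw, sub_zero]
      simpa using this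
  -- surjectivity onto V
  have hsurjV : ∀ t ∈ V, ∃ v ∈ F, P₂.mulVec v = t := by
    intro t ht
    have htr : t ∈ LinearMap.range P₂.mulVecLin := by
      rw [← hV₂]; exact Submodule.mem_sup_left ht
    obtain ⟨u, hu⟩ := htr
    have h4u : P₄.mulVec u ∈ T ⊔ (LinearMap.ker P₂.mulVecLin).map P₄.mulVecLin := by
      rw [hT₂]; exact ⟨u, rfl⟩
    rw [Submodule.mem_sup] at h4u
    obtain ⟨t', ht', p, hp, hsum⟩ := h4u
    obtain ⟨w, hw, hwp⟩ := hp
    refine ⟨u - w, ?_, ?_⟩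
    · rw [hmemF]
      have e2 : P₂.mulVec (u - w) = t := by
        have : P₂.mulVecLin (u - w) = t := by
          rw [map_sub, hu, LinearMap.mem_ker.1 hw, sub_zero]
        simpa using this
      have e4 : P₄.mulVec (u - w) = t' := by
        have : P₄.mulVecLin (u - w) = t' := by
          rw [map_sub, hwp]
          have : P₄.mulVecLin u = t' + p := hsum.symm
          rw [this]; abel
        simpa using this
      rw [e4, e2]; exact ⟨ht', ht⟩
    · have : P₂.mulVecLin (u - w) = t := by
        rw [map_sub, hu, LinearMap.mem_ker.1 hw, sub_zero]
      simpa using this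
  have hinj4 : ∀ a ∈ F, ∀ b ∈ F, P₄.mulVec a = P₄.mulVec b → a = b := by
    intro a ha b hb hab
    have hd : a - b ∈ F := sub_mem ha hb
    have : P₄.mulVec (a - b) = 0 := by
      have : P₄.mulVecLin (a - b) = 0 := by
        rw [map_sub]
        simpa using sub_eq_zero.2 hab
      simpa using this
    have := hz4 _ hd this
    exact sub_eq_zero.1 this
  have hinj2 : ∀ a ∈ F, ∀ b ∈ F, P₂.mulVec a = P₂.mulVec b → a = b := by
    intro a ha b hb hab
    have hd : a - b ∈ F := sub_mem ha hb
    have : P₂.mulVec (a - b) = 0 := by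
      have : P₂.mulVecLin (a - b) = 0 := by
        rw [map_sub]
        simpa using sub_eq_zero.2 hab
      simpa using this
    have := hz2 _ hd this
    exact sub_eq_zero.1 this
  refine ⟨⟨fun v hv => ((hmemF v).1 hv).1, fun a ha b hb => hinj4 a ha b hb,
      fun t ht => ?_⟩,
    ⟨fun v hv => ((hmemF v).1 hv).2, fun a ha b hb => hinj2 a ha b hb,
      fun t ht => ?_⟩, ?_⟩
  · obtain ⟨v, hvF, hv⟩ := hsurjT t ht
    exact ⟨v, hvF, hv⟩
  · obtain ⟨v, hvF, hv⟩ := hsurjV t ht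
    exact ⟨v, hvF, hv⟩
  · -- build the linear equivalence
    have hm4 : ∀ x ∈ F, P₄.mulVecLin x ∈ T := fun x hx => ((hmemF x).1 hx).1
    have hm2 : ∀ x ∈ F, P₂.mulVecLin x ∈ V := fun x hx => ((hmemF x).1 hx).2
    let g₄ : F →ₗ[K] T := P₄.mulVecLin.restrict hm4
    let g₂ : F →ₗ[K] V := P₂.mulVecLin.restrict hm2
    have hb4 : Function.Bijective g₄ := by
      constructor
      · intro a b hab
        ext1
        exact hinj4 a a.2 b b.2 (congrArg Subtype.val hab)
      · rintro ⟨t, ht⟩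
        obtain ⟨v, hvF, hv⟩ := hsurjT t ht
        exact ⟨⟨v, hvF⟩, Subtype.ext hv⟩
    have hb2 : Function.Bijective g₂ := by
      constructor
      · intro a b hab
        ext1
        exact hinj2 a a.2 b b.2 (congrArg Subtype.val hab)
      · rintro ⟨t, ht⟩
        obtain ⟨v, hvF, hv⟩ := hsurjV t ht
        exact ⟨⟨v, hvF⟩, Subtype.ext hv⟩
    let e₄ := LinearEquiv.ofBijective g₄ hb4
    let e₂ := LinearEquiv.ofBijective g₂ hb2
    refine ⟨e₄.symm.trans e₂, ?_⟩
    intro v hvF hv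
    have h1 : e₄ ⟨v, hvF⟩ = ⟨P₄.mulVec v, hv⟩ := by
      apply Subtype.ext
      simp [e₄, g₄, LinearMap.restrict_apply]
    have h2 : e₄.symm ⟨P₄.mulVec v, hv⟩ = ⟨v, hvF⟩ := by
      rw [← h1, LinearEquiv.symm_apply_apply]
    show ((e₄.symm.trans e₂) ⟨P₄.mulVec v, hv⟩ : Fin n → K) = P₂.mulVec v
    rw [LinearEquiv.trans_apply, h2]
    simp [e₂, g₂, LinearMap.restrict_apply]
end

section
/- Assume r₂ + r₁ + r₄ ≥ m + n. Let W be a subspace of Kⁿ with W ∩ im P₁ = {0} and W + im P₁ = Kⁿ, and let T be a subspace of Kᵐ with T ⊆ im P₄, T ∩ P₄(ker P₂) = {0}, and dim T + r₁ = n. Let L be an n×m matrix over K satisfying: im L = W; (L·P₃)(ker P₁) = W; for every v ∈ T there exists u ∈ Kᵐ with P₄u = v and Lv = P₂u; and Lw = 0 for every w ∈ P₄(ker P₂). Then P₁ − L·P₃ is invertible, rank L + r₁ = n, and rank(P₂ − L·P₄) + n = r₁ + r₂. -/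
open Module LinearMap


lemma aux_finrank_map_eq {K V V' : Type*} [Field K] [AddCommGroup V] [Module K V]
    [AddCommGroup V'] [Module K V'] [FiniteDimensional K V]
    (f : V →ₗ[K] V') (p : Submodule K V) (h : p ⊓ LinearMap.ker f = ⊥) :
    finrank K (p.map f) = finrank K p := by
  have h1 : LinearMap.range (f.comp p.subtype) = p.map f := by
    rw [LinearMap.range_comp, Submodule.range_subtype]
  have h2 : LinearMap.ker (f.comp p.subtype) = ⊥ := by
    rw [Submodule.eq_bot_iff]
    rintro ⟨x, hx⟩ hker
    have : x ∈ p ⊓ LinearMap.ker f := ⟨hx, hker⟩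
    rw [h] at this
    exact Subtype.ext this
  have := LinearMap.finrank_range_add_finrank_ker (f.comp p.subtype)
  rw [h1, h2, finrank_bot, add_zero] at this
  exact this

lemma aux_rank_add_le {K : Type*} [Field K] {m n : Type*} [Fintype n]
    (A B : Matrix m n K) : (A + B).rank ≤ A.rank + B.rank := by
  classical
  have hle : LinearMap.range (A + B).mulVecLin ≤
      LinearMap.range A.mulVecLin ⊔ LinearMap.range B.mulVecLin := by
    rintro _ ⟨v, rfl⟩
    rw [Matrix.mulVecLin_apply, Matrix.add_mulVec]
    exact Submodule.add_mem_sup ⟨v, rfl⟩ ⟨v, rfl⟩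
  have h1 := Submodule.finrank_mono hle
  have h2 := Submodule.finrank_sup_add_finrank_inf_eq
    (LinearMap.range A.mulVecLin) (LinearMap.range B.mulVecLin)
  simp only [Matrix.rank]
  omega



/-- Lemma (sufficient conditions, case `r₂ ≥ m + n - r₁ - r₄`): if `W` is a
complement of `im P₁` in `Kⁿ`, `T ⊆ im P₄` satisfies `T ∩ P₄(ker P₂) = {0}`
and `dim T = n - r₁`, and `L` satisfies `im L = W`, `(L·P₃)(ker P₁) = W`,
`Lv ∈ P₂(P₄⁻¹({v}))` for all `v ∈ T` and `L(P₄(ker P₂)) = {0}`, then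
`P₁ - L·P₃` is invertible, `rank L = n - r₁` and
`rank (P₂ - L·P₄) = r₁ + r₂ - n`. -/
theorem stmt_16 {K : Type*} [Field K] {m n : ℕ}
    (P₄ : Matrix (Fin m) (Fin m) K) (P₃ : Matrix (Fin m) (Fin n) K)
    (P₂ : Matrix (Fin n) (Fin m) K) (P₁ : Matrix (Fin n) (Fin n) K)
    (hP : IsUnit (Matrix.fromBlocks P₄ P₃ P₂ P₁))
    (hr : P₂.rank + P₁.rank + P₄.rank ≥ m + n)
    (W : Submodule K (Fin n → K))
    (hW₁ : W ⊓ LinearMap.range P₁.mulVecLin = ⊥)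
    (hW₂ : W ⊔ LinearMap.range P₁.mulVecLin = ⊤)
    (T : Submodule K (Fin m → K))
    (hT₀ : T ≤ LinearMap.range P₄.mulVecLin)
    (hT₁ : T ⊓ (LinearMap.ker P₂.mulVecLin).map P₄.mulVecLin = ⊥)
    (hT₂ : Module.finrank K T + P₁.rank = n)
    (L : Matrix (Fin n) (Fin m) K)
    (hL₁ : LinearMap.range L.mulVecLin = W)
    (hL₂ : (LinearMap.ker P₁.mulVecLin).map (L * P₃).mulVecLin = W)
    (hL₃ : ∀ v ∈ T, ∃ u : Fin m → K, P₄.mulVec u = v ∧ L.mulVec v = P₂.mulVec u)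
    (hL₄ : ∀ w ∈ (LinearMap.ker P₂.mulVecLin).map P₄.mulVecLin,
      L.mulVec w = 0) :
    IsUnit (P₁ - L * P₃) ∧ L.rank + P₁.rank = n ∧
      (P₂ - L * P₄).rank + n = P₁.rank + P₂.rank := by
  classical
  -- dimension facts
  have hdimW : finrank K W + P₁.rank = n := by
    have h := Submodule.finrank_sup_add_finrank_inf_eq W (LinearMap.range P₁.mulVecLin)
    rw [hW₁, hW₂, finrank_bot, finrank_top, add_zero] at h
    have htop : finrank K (Fin n → K) = n := by simp
    rw [htop] at h
    rw [Matrix.rank]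
    omega
  -- Part 1 : invertibility of P₁ - L*P₃
  have hsurj : Function.Surjective (P₁ - L * P₃).mulVecLin := by
    intro y
    have hy : y ∈ W ⊔ LinearMap.range P₁.mulVecLin := by rw [hW₂]; trivial
    obtain ⟨w, hw, p, hp, rfl⟩ := Submodule.mem_sup.mp hy
    obtain ⟨x, rfl⟩ := hp
    have hmem : -w - L.mulVec (P₃.mulVec x) ∈ W := by
      refine sub_mem (neg_mem hw) ?_
      rw [← hL₁]
      exact ⟨P₃.mulVec x, rfl⟩
    rw [← hL₂] at hmem
    obtain ⟨k, hk, hkeq⟩ := hmem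
    refine ⟨x + k, ?_⟩
    have hk' : P₁.mulVec k = 0 := hk
    simp only [Matrix.mulVecLin_apply, Matrix.sub_mulVec, Matrix.mulVec_add] at *
    simp only [Matrix.mulVec_mulVec] at hkeq ⊢
    rw [hk', hkeq]
    abel
  have hinj : Function.Injective (P₁ - L * P₃).mulVecLin :=
    (LinearMap.injective_iff_surjective).mpr hsurj
  have hIsUnit : IsUnit (P₁ - L * P₃) := by
    rw [← Matrix.mulVec_injective_iff_isUnit]
    exact hinj
  -- Part 2 : rank L
  have hrankL : L.rank + P₁.rank = n := by
    rw [Matrix.rank, hL₁]; exact hdimW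
  refine ⟨hIsUnit, hrankL, ?_⟩
  -- Part 3
  set N := LinearMap.ker (P₂ - L * P₄).mulVecLin with hN
  -- ker P₂ ∩ ker P₄ = ⊥
  have hker24 : LinearMap.ker P₂.mulVecLin ⊓ LinearMap.ker P₄.mulVecLin = ⊥ := by
    rw [Submodule.eq_bot_iff]
    rintro u ⟨hu2, hu4⟩
    have hPinj : Function.Injective (Matrix.fromBlocks P₄ P₃ P₂ P₁).mulVec :=
      Matrix.mulVec_injective_iff_isUnit.mpr hP
    have : (Matrix.fromBlocks P₄ P₃ P₂ P₁).mulVec (Sum.elim u 0) =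
        (Matrix.fromBlocks P₄ P₃ P₂ P₁).mulVec 0 := by
      rw [Matrix.fromBlocks_mulVec, Matrix.mulVec_zero]
      have hu2' : P₂.mulVec u = 0 := hu2
      have hu4' : P₄.mulVec u = 0 := hu4
      simp [hu2', hu4']
    have := hPinj this
    have : u = 0 := by
      funext i; exact congrFun this (Sum.inl i)
    exact this
  -- ker P₂ ≤ N
  have hkerN : LinearMap.ker P₂.mulVecLin ≤ N := by
    intro u hu
    have hu' : P₂.mulVec u = 0 := hu
    have hL4 : L.mulVec (P₄.mulVec u) = 0 :=
      hL₄ _ ⟨u, hu, rfl⟩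
    show (P₂ - L * P₄).mulVec u = 0
    rw [Matrix.sub_mulVec, ← Matrix.mulVec_mulVec, hu', hL4, sub_zero]
  -- N ∩ ker P₄ = ⊥
  have hNdisj : N ⊓ LinearMap.ker P₄.mulVecLin = ⊥ := by
    rw [Submodule.eq_bot_iff]
    rintro u ⟨huN, hu4⟩
    have hu4' : P₄.mulVec u = 0 := hu4
    have huN' : (P₂ - L * P₄).mulVec u = 0 := huN
    rw [Matrix.sub_mulVec, ← Matrix.mulVec_mulVec, hu4', Matrix.mulVec_zero,
      sub_zero] at huN'
    have : u ∈ LinearMap.ker P₂.mulVecLin ⊓ LinearMap.ker P₄.mulVecLin :=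
      ⟨huN', hu4'⟩
    rw [hker24] at this
    exact this
  -- T ≤ P₄(N)
  have hTN : T ≤ N.map P₄.mulVecLin := by
    intro v hv
    obtain ⟨u, hu4, huL⟩ := hL₃ v hv
    refine ⟨u, ?_, hu4⟩
    show (P₂ - L * P₄).mulVec u = 0
    rw [Matrix.sub_mulVec, ← Matrix.mulVec_mulVec, hu4, ← huL, sub_self]
  -- P₄(ker P₂) ≤ P₄(N)
  have hK2N : (LinearMap.ker P₂.mulVecLin).map P₄.mulVecLin ≤ N.map P₄.mulVecLin :=
    Submodule.map_mono hkerN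
  -- dimension comparison
  have hdim1 : finrank K (N.map P₄.mulVecLin) = finrank K N :=
    aux_finrank_map_eq _ _ hNdisj
  have hdim2 : finrank K ((LinearMap.ker P₂.mulVecLin).map P₄.mulVecLin)
      = finrank K (LinearMap.ker P₂.mulVecLin) :=
    aux_finrank_map_eq _ _ hker24
  have hsuple : T ⊔ (LinearMap.ker P₂.mulVecLin).map P₄.mulVecLin ≤ N.map P₄.mulVecLin :=
    sup_le hTN hK2N
  have hsupdim := Submodule.finrank_sup_add_finrank_inf_eq T
    ((LinearMap.ker P₂.mulVecLin).map P₄.mulVecLin)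
  rw [hT₁, finrank_bot, add_zero] at hsupdim
  have hN_ge : finrank K T + finrank K (LinearMap.ker P₂.mulVecLin) ≤ finrank K N := by
    rw [← hdim2, ← hsupdim, ← hdim1]
    exact Submodule.finrank_mono hsuple
  -- rank-nullity
  have hrn1 : (P₂ - L * P₄).rank + finrank K N = m := by
    have := LinearMap.finrank_range_add_finrank_ker (P₂ - L * P₄).mulVecLin
    rw [Matrix.rank]
    simpa using this
  have hrn2 : P₂.rank + finrank K (LinearMap.ker P₂.mulVecLin) = m := by
    have := LinearMap.finrank_range_add_finrank_ker P₂.mulVecLin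
    rw [Matrix.rank]
    simpa using this
  -- subadditivity direction
  have hsub : P₂.rank ≤ (P₂ - L * P₄).rank + L.rank := by
    have h1 : P₂ = (P₂ - L * P₄) + L * P₄ := by abel
    calc P₂.rank = ((P₂ - L * P₄) + L * P₄).rank := by rw [← h1]
      _ ≤ (P₂ - L * P₄).rank + (L * P₄).rank := aux_rank_add_le _ _
      _ ≤ (P₂ - L * P₄).rank + L.rank :=
        Nat.add_le_add_left (Matrix.rank_mul_le_left _ _) _
  omega
end

section
/- Let L be an n×m matrix over K such that P₁ − L·P₃ is invertible, and set C = P₄ − P₃(P₁ − LP₃)⁻¹(P₂ − LP₄). Let z ∈ Kᵐ with z ∉ ker(P₂ − LP₄) + ker P₄, and let L′ be an n×m matrix over K satisfying: rank L′ = 1; L′(P₄x) = 0 for all x ∈ ker(P₂ − LP₄); L′(P₄z) = (P₂ − LP₄)z; and L′(Cz) ≠ 0. Then P₁ − (L + L′)·P₃ is invertible and rank(P₂ − (L + L′)·P₄) + 1 = rank(P₂ − L·P₄). -/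
/-- Rank exchange lemma: given `L` with `P₁ - L·P₃` invertible,
`C = P₄ - P₃(P₁ - LP₃)⁻¹(P₂ - LP₄)`, a vector `z ∉ ker(P₂ - LP₄) + ker P₄`,
and a rank-one matrix `L′` with `L′(P₄ ker(P₂ - LP₄)) = {0}`,
`L′P₄z = (P₂ - LP₄)z`, `L′Cz ≠ 0`, then `P₁ - (L + L′)·P₃` is invertible and
`rank (P₂ - (L + L′)P₄) = rank (P₂ - LP₄) - 1`. -/
theorem stmt_17 {K : Type*} [Field K] {m n : ℕ}
    (P₄ : Matrix (Fin m) (Fin m) K) (P₃ : Matrix (Fin m) (Fin n) K)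
    (P₂ : Matrix (Fin n) (Fin m) K) (P₁ : Matrix (Fin n) (Fin n) K)
    (hP : IsUnit (Matrix.fromBlocks P₄ P₃ P₂ P₁))
    (L : Matrix (Fin n) (Fin m) K) (hL : IsUnit (P₁ - L * P₃))
    (C : Matrix (Fin m) (Fin m) K)
    (hC : C = P₄ - P₃ * (P₁ - L * P₃)⁻¹ * (P₂ - L * P₄))
    (z : Fin m → K)
    (hz : z ∉ LinearMap.ker (P₂ - L * P₄).mulVecLin ⊔
      LinearMap.ker P₄.mulVecLin)
    (L' : Matrix (Fin n) (Fin m) K)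
    (hL'₁ : L'.rank = 1)
    (hL'₂ : ∀ x ∈ LinearMap.ker (P₂ - L * P₄).mulVecLin,
      L'.mulVec (P₄.mulVec x) = 0)
    (hL'₃ : L'.mulVec (P₄.mulVec z) = (P₂ - L * P₄).mulVec z)
    (hL'₄ : L'.mulVec (C.mulVec z) ≠ 0) :
    IsUnit (P₁ - (L + L') * P₃) ∧
    (P₂ - (L + L') * P₄).rank + 1 = (P₂ - L * P₄).rank := by
  set A : Matrix (Fin n) (Fin m) K := P₂ - L * P₄ with hA
  set B : Matrix (Fin n) (Fin n) K := P₁ - L * P₃ with hB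
  -- z is not in the kernel of A
  have hzA : A.mulVec z ≠ 0 := by
    intro h
    exact hz (Submodule.mem_sup_left (by simpa [Matrix.mulVecLin_apply] using h))
  set u : Fin n → K := A.mulVec z with hu
  -- range of L' is span of u
  have hu_mem : u ∈ LinearMap.range L'.mulVecLin :=
    ⟨P₄.mulVec z, by simpa [Matrix.mulVecLin_apply] using hL'₃⟩
  have hrange : LinearMap.range L'.mulVecLin = Submodule.span K {u} := by
    have hle : Submodule.span K {u} ≤ LinearMap.range L'.mulVecLin := by
      rw [Submodule.span_le, Set.singleton_subset_iff]; exact hu_mem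
    refine (Submodule.eq_of_le_of_finrank_le hle ?_).symm
    have h1 : Module.finrank K (LinearMap.range L'.mulVecLin) = 1 := hL'₁
    have h2 : Module.finrank K (Submodule.span K ({u} : Set (Fin n → K))) = 1 :=
      finrank_span_singleton hzA
    rw [h1, h2]
  have hspan : ∀ w : Fin m → K, ∃ c : K, L'.mulVec w = c • u := by
    intro w
    have : L'.mulVec w ∈ LinearMap.range L'.mulVecLin :=
      ⟨w, by simp [Matrix.mulVecLin_apply]⟩
    rw [hrange] at this
    obtain ⟨c, hc⟩ := Submodule.mem_span_singleton.mp this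
    exact ⟨c, hc.symm⟩
  -- the inverse of B
  have hBdet : IsUnit B.det := (Matrix.isUnit_iff_isUnit_det B).mp hL
  have hBinv : ∀ x : Fin n → K, B⁻¹.mulVec (B.mulVec x) = x := by
    intro x
    rw [Matrix.mulVec_mulVec, Matrix.nonsing_inv_mul B hBdet, Matrix.one_mulVec]
  set y : Fin n → K := B⁻¹.mulVec u with hy
  obtain ⟨t, ht⟩ := hspan (P₃.mulVec y)
  -- compute L' C z
  have hCz : C.mulVec z = P₄.mulVec z - P₃.mulVec y := by
    rw [hC, Matrix.sub_mulVec]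
    congr 1
    rw [hy, hu, Matrix.mulVec_mulVec, Matrix.mulVec_mulVec]
  have hLCz : L'.mulVec (C.mulVec z) = (1 - t) • u := by
    have : L'.mulVec (P₄.mulVec z - P₃.mulVec y)
        = L'.mulVec (P₄.mulVec z) - L'.mulVec (P₃.mulVec y) := by
      simpa [Matrix.mulVecLin_apply] using map_sub L'.mulVecLin (P₄.mulVec z) (P₃.mulVec y)
    rw [hCz, this, hL'₃, ht, sub_smul, one_smul]
  have htne : t ≠ 1 := by
    intro h
    apply hL'₄
    rw [hLCz, h, sub_self, zero_smul]
  -- Part 1: invertibility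
  have hBL' : P₁ - (L + L') * P₃ = B - L' * P₃ := by
    rw [hB, Matrix.add_mul, sub_add_eq_sub_sub]
  have part1 : IsUnit (P₁ - (L + L') * P₃) := by
    rw [hBL', Matrix.isUnit_iff_isUnit_det, isUnit_iff_ne_zero]
    intro hdet
    obtain ⟨x, hx0, hx⟩ := (Matrix.exists_mulVec_eq_zero_iff).mpr hdet
    rw [Matrix.sub_mulVec, sub_eq_zero, ← Matrix.mulVec_mulVec] at hx
    obtain ⟨c, hc⟩ := hspan (P₃.mulVec x)
    have hBx : B.mulVec x = c • u := hx.trans hc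
    have hxc : x = c • y := by
      rw [← hBinv x, hBx, Matrix.mulVec_smul, hy]
    have hLP3x : L'.mulVec (P₃.mulVec x) = (c * t) • u := by
      rw [hxc, Matrix.mulVec_smul, Matrix.mulVec_smul, ht, smul_smul]
    have : c • u = (c * t) • u := hc.symm.trans hLP3x
    have hc0 : c = 0 := by
      by_contra hc0
      apply htne
      have h1 : (c - c * t) • u = 0 := by rw [sub_smul, this, sub_self]
      have h2 : c - c * t = 0 := by
        rcases smul_eq_zero.mp h1 with h | h
        · exact h
        · exact absurd h hzA
      have h3 : c * (1 - t) = 0 := by rw [mul_sub, mul_one]; exact h2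
      rcases mul_eq_zero.mp h3 with h | h
      · exact absurd h hc0
      · exact (sub_eq_zero.mp h).symm
    apply hx0
    rw [hxc, hc0, zero_smul]
  -- Part 2: rank
  have hAL' : P₂ - (L + L') * P₄ = A - L' * P₄ := by
    rw [hA, Matrix.add_mul, sub_add_eq_sub_sub]
  set A' : Matrix (Fin n) (Fin m) K := A - L' * P₄ with hA'
  have hker : LinearMap.ker A'.mulVecLin
      = LinearMap.ker A.mulVecLin ⊔ Submodule.span K {z} := by
    apply le_antisymm
    · intro x hx
      rw [LinearMap.mem_ker, Matrix.mulVecLin_apply, hA', Matrix.sub_mulVec,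
        sub_eq_zero, ← Matrix.mulVec_mulVec] at hx
      obtain ⟨c, hc⟩ := hspan (P₄.mulVec x)
      have hAx : A.mulVec x = c • u := hx.trans hc
      have h0 : A.mulVec (x - c • z) = 0 := by
        rw [Matrix.mulVec_sub, Matrix.mulVec_smul, hAx, ← hu, sub_self]
      have hmem1 : x - c • z ∈ LinearMap.ker A.mulVecLin := by
        simpa [Matrix.mulVecLin_apply] using h0
      have hmem2 : c • z ∈ Submodule.span K ({z} : Set (Fin m → K)) :=
        Submodule.smul_mem _ c (Submodule.mem_span_singleton_self z)
      have hxeq : x = (x - c • z) + c • z := by ring_nf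
      rw [hxeq]
      exact Submodule.add_mem_sup hmem1 hmem2
    · apply sup_le
      · intro x hx
        rw [LinearMap.mem_ker, Matrix.mulVecLin_apply] at hx ⊢
        rw [hA', Matrix.sub_mulVec, hx, ← Matrix.mulVec_mulVec,
          hL'₂ x (by simpa [Matrix.mulVecLin_apply] using hx), sub_zero]
      · rw [Submodule.span_le, Set.singleton_subset_iff]
        rw [SetLike.mem_coe, LinearMap.mem_ker, Matrix.mulVecLin_apply,
          hA', Matrix.sub_mulVec, ← Matrix.mulVec_mulVec, hL'₃, ← hu, sub_self]
  have hzker : z ∉ LinearMap.ker A.mulVecLin := by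
    intro h; exact hz (Submodule.mem_sup_left h)
  have hz0 : z ≠ 0 := by
    intro h; apply hzker; rw [h]; exact (LinearMap.ker A.mulVecLin).zero_mem
  have hdisj : LinearMap.ker A.mulVecLin ⊓ Submodule.span K {z} = ⊥ := by
    rw [← disjoint_iff]
    exact Submodule.disjoint_span_singleton' hz0 |>.mpr hzker
  have hfr : Module.finrank K (LinearMap.ker A'.mulVecLin)
      = Module.finrank K (LinearMap.ker A.mulVecLin) + 1 := by
    have := Submodule.finrank_sup_add_finrank_inf_eq
      (LinearMap.ker A.mulVecLin) (Submodule.span K {z})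
    rw [hdisj, finrank_bot, add_zero, finrank_span_singleton hz0] at this
    rw [hker, this]
  have hrn1 := LinearMap.finrank_range_add_finrank_ker A'.mulVecLin
  have hrn2 := LinearMap.finrank_range_add_finrank_ker A.mulVecLin
  have hfinK : Module.finrank K (Fin m → K) = m := by simp
  rw [hfinK] at hrn1 hrn2
  have part2 : A'.rank + 1 = A.rank := by
    have e1 : A'.rank = Module.finrank K (LinearMap.range A'.mulVecLin) := rfl
    have e2 : A.rank = Module.finrank K (LinearMap.range A.mulVecLin) := rfl
    rw [e1, e2]
    omega
  exact ⟨part1, by rw [hAL']; exact part2⟩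
end

section
/- Let Q₂ and Q₃ be invertible n×n matrices over K and let P = [[0, Q₃], [Q₂, 0]] be the 2n×2n blocked matrix with zero diagonal blocks. Then P is invertible, and for every invertible n×n matrix L over K one has P = [[Iₙ, 0], [L, Iₙ]] · [[L⁻¹Q₂, Q₃], [0, −L·Q₃]] · [[Iₙ, 0], [−(L·Q₃)⁻¹Q₂, Iₙ]]; in this decomposition both off-diagonal factors L and −(L·Q₃)⁻¹Q₂ have rank n. Moreover, every decomposition (3) of P (with m = n) satisfies rank L = n and rank R = n. -/
open Matrix

lemma units_of_mul_isUnit {K : Type*} [Field K] {n : ℕ}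
    {A B : Matrix (Fin n) (Fin n) K} (h : IsUnit (A * B)) : IsUnit A ∧ IsUnit B := by
  rw [Matrix.isUnit_iff_isUnit_det, Matrix.det_mul] at h
  exact ⟨Matrix.isUnit_iff_isUnit_det _ |>.mpr (isUnit_of_mul_isUnit_left h),
    Matrix.isUnit_iff_isUnit_det _ |>.mpr (isUnit_of_mul_isUnit_right h)⟩

/-- Example: for invertible `Q₂`, `Q₃`, the matrix `P = [[0, Q₃], [Q₂, 0]]` is
invertible; for every invertible `L` the displayed three-factor product is a
decomposition (3) of `P` whose off-diagonal factors `L` and `-(LQ₃)⁻¹Q₂` have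
rank `n`; and every decomposition (3) of `P` has `rank L = n` and
`rank R = n`. -/
theorem stmt_19 {K : Type*} [Field K] {n : ℕ}
    (Q₂ Q₃ : Matrix (Fin n) (Fin n) K) (hQ₂ : IsUnit Q₂) (hQ₃ : IsUnit Q₃) :
    IsUnit (Matrix.fromBlocks (0 : Matrix (Fin n) (Fin n) K) Q₃ Q₂ 0) ∧
    (∀ L : Matrix (Fin n) (Fin n) K, IsUnit L →
      Matrix.fromBlocks (0 : Matrix (Fin n) (Fin n) K) Q₃ Q₂ 0 =
        Matrix.fromBlocks 1 0 L 1 *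
          Matrix.fromBlocks (L⁻¹ * Q₂) Q₃ 0 (-(L * Q₃)) *
          Matrix.fromBlocks 1 0 (-((L * Q₃)⁻¹ * Q₂)) 1 ∧
      L.rank = n ∧ (-((L * Q₃)⁻¹ * Q₂)).rank = n) ∧
    (∀ L R C₄ C₃ C₁ : Matrix (Fin n) (Fin n) K,
      Matrix.fromBlocks (0 : Matrix (Fin n) (Fin n) K) Q₃ Q₂ 0 =
        Matrix.fromBlocks 1 0 L 1 * Matrix.fromBlocks C₄ C₃ 0 C₁ *
          Matrix.fromBlocks 1 0 R 1 →
      L.rank = n ∧ R.rank = n) := by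
  have hcard : Fintype.card (Fin n) = n := Fintype.card_fin n
  refine ⟨?_, ?_, ?_⟩
  · apply (Matrix.isUnit_iff_isUnit_det _).mpr
    apply Matrix.isUnit_det_of_right_inverse (B := Matrix.fromBlocks 0 Q₂⁻¹ Q₃⁻¹ 0)
    rw [Matrix.fromBlocks_multiply]
    rw [show (1 : Matrix (Fin n ⊕ Fin n) (Fin n ⊕ Fin n) K) = Matrix.fromBlocks 1 0 0 1 from
      (Matrix.fromBlocks_one).symm]
    simp [Matrix.mul_nonsing_inv _ ((Matrix.isUnit_iff_isUnit_det _).mp hQ₂),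
      Matrix.mul_nonsing_inv _ ((Matrix.isUnit_iff_isUnit_det _).mp hQ₃), Matrix.fromBlocks_one]
  · intro L hL
    have hLQ : IsUnit (L * Q₃) := hL.mul hQ₃
    refine ⟨?_, ?_, ?_⟩
    · rw [Matrix.fromBlocks_multiply, Matrix.fromBlocks_multiply]
      rw [Matrix.fromBlocks_inj]
      refine ⟨?_, by simp, ?_, by simp⟩
      · simp only [Matrix.one_mul, Matrix.zero_mul, Matrix.mul_zero, add_zero, zero_add,
          Matrix.mul_neg, Matrix.mul_one]
        rw [Matrix.mul_inv_rev]
        simp [← Matrix.mul_assoc,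
          Matrix.mul_nonsing_inv _ ((Matrix.isUnit_iff_isUnit_det _).mp hQ₃)]
      · simp [Matrix.mul_nonsing_inv_cancel_left _ _ ((Matrix.isUnit_iff_isUnit_det _).mp hL)]
    · rw [Matrix.rank_of_isUnit _ hL, hcard]
    · rw [Matrix.rank_of_isUnit, hcard]
      exact ((Matrix.isUnit_nonsing_inv_iff.mpr hLQ).mul hQ₂).neg
  · intro L R C₄ C₃ C₁ h
    rw [Matrix.fromBlocks_multiply, Matrix.fromBlocks_multiply, Matrix.fromBlocks_inj] at h
    obtain ⟨h11, h12, h21, h22⟩ := h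
    simp only [Matrix.one_mul, Matrix.zero_mul, Matrix.mul_zero, add_zero, zero_add,
      Matrix.mul_one] at h11 h12 h21 h22
    have hq : Q₂ = L * C₄ := by rw [h21, ← h22]; simp
    have hL : IsUnit L := (units_of_mul_isUnit (hq ▸ hQ₂)).1
    have hC4 : C₄ = -(C₃ * R) := eq_neg_of_add_eq_zero_left h11.symm
    have hq2 : Q₂ = -(L * C₃) * R := by
      rw [hq, hC4]; simp [Matrix.mul_neg, Matrix.neg_mul, Matrix.mul_assoc]
    have hR : IsUnit R := (units_of_mul_isUnit (hq2 ▸ hQ₂)).2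
    exact ⟨by rw [Matrix.rank_of_isUnit _ hL, hcard],
      by rw [Matrix.rank_of_isUnit _ hR, hcard]⟩
end
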